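/- arXiv:2212.13650 — 3 statements merged into one kernel-verified Lean document; each statement's English description precedes it below -/
import Mathlib

section
/- Let T > 0 and let R, Z : [0,T] → ℝ be continuous functions such that ∫₀ᵗ R(s) Z(t−s) ds = 0 for every t ∈ [0,T]. If R(0) ≠ 0, then Z(s) = 0 for all s ∈ [0,T]. -/
open MeasureTheory Set intervalIntegral Complex


lemma swap_tri {T : ℝ} (hT : 0 ≤ T) (φ : ℝ → ℝ → ℝ)
    (hφ : Continuous fun p : ℝ × ℝ => φ p.1 p.2) :
    (∫ s in (0:ℝ)..T, ∫ t in s..T, φ s t) = ∫ t in (0:ℝ)..T, ∫ s in (0:ℝ)..t, φ s t := by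
  set D : Set (ℝ × ℝ) := {p | 0 < p.1} ∩ ({p | p.1 < p.2} ∩ {p | p.2 ≤ T}) with hD
  have hDm : MeasurableSet D :=
    ((measurableSet_lt measurable_const measurable_fst)).inter
      (((measurableSet_lt measurable_fst measurable_snd)).inter
        (measurableSet_le measurable_snd measurable_const))
  set Φ : ℝ × ℝ → ℝ := D.indicator (fun p => φ p.1 p.2) with hΦ
  have hDK : D ⊆ Icc (0:ℝ) T ×ˢ Icc (0:ℝ) T := by
    rintro ⟨s, t⟩ ⟨h1, h2, h3⟩
    exact ⟨⟨le_of_lt h1, le_of_lt (lt_of_lt_of_le h2 h3)⟩, ⟨le_trans (le_of_lt h1) (le_of_lt h2), h3⟩⟩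
  have hΦint : Integrable Φ := by
    rw [hΦ, integrable_indicator_iff hDm]
    exact (hφ.continuousOn.integrableOn_compact (isCompact_Icc.prod isCompact_Icc)).mono_set hDK
  have key : (∫ s : ℝ, ∫ t : ℝ, Φ (s, t)) = ∫ t : ℝ, ∫ s : ℝ, Φ (s, t) := by
    have := MeasureTheory.integral_integral_swap (f := fun s t => Φ (s, t))
      (μ := (volume : Measure ℝ)) (ν := (volume : Measure ℝ)) ?_
    · exact this
    · have : Function.uncurry (fun s t => Φ (s, t)) = Φ := by
        funext p; simp [Function.uncurry]
      rw [this, ← Measure.volume_eq_prod]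
      exact hΦint
  have hleft : ∀ s : ℝ, (∫ t : ℝ, Φ (s, t)) =
      (Ioc (0:ℝ) T).indicator (fun s => ∫ t in s..T, φ s t) s := by
    intro s
    by_cases hs : s ∈ Ioc (0:ℝ) T
    · have hslice : (fun t => Φ (s, t)) = (Ioc s T).indicator (fun t => φ s t) := by
        funext t
        by_cases ht : t ∈ Ioc s T
        · rw [Set.indicator_of_mem ht]
          exact Set.indicator_of_mem (show (s,t) ∈ D from ⟨hs.1, ht.1, ht.2⟩) _
        · rw [Set.indicator_of_notMem ht]
          refine Set.indicator_of_notMem ?_ _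
          rintro ⟨-, h2, h3⟩; exact ht ⟨h2, h3⟩
      rw [hslice, MeasureTheory.integral_indicator measurableSet_Ioc,
        Set.indicator_of_mem hs, intervalIntegral.integral_of_le hs.2]
    · have hslice : (fun t => Φ (s, t)) = fun _ => (0:ℝ) := by
        funext t
        refine Set.indicator_of_notMem ?_ _
        rintro ⟨h1, h2, h3⟩
        exact hs ⟨h1, le_trans (le_of_lt h2) h3⟩
      rw [hslice, Set.indicator_of_notMem hs, MeasureTheory.integral_zero]
  have hright : ∀ t : ℝ, (∫ s : ℝ, Φ (s, t)) =
      (Ioc (0:ℝ) T).indicator (fun t => ∫ s in (0:ℝ)..t, φ s t) t := by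
    intro t
    by_cases ht : t ∈ Ioc (0:ℝ) T
    · have hslice : (fun s => Φ (s, t)) = (Ioo (0:ℝ) t).indicator (fun s => φ s t) := by
        funext s
        by_cases hst : s ∈ Ioo (0:ℝ) t
        · rw [Set.indicator_of_mem hst]
          exact Set.indicator_of_mem (show (s,t) ∈ D from ⟨hst.1, hst.2, ht.2⟩) _
        · rw [Set.indicator_of_notMem hst]
          refine Set.indicator_of_notMem ?_ _
          rintro ⟨h1, h2, -⟩; exact hst ⟨h1, h2⟩
      rw [hslice, MeasureTheory.integral_indicator measurableSet_Ioo,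
        Set.indicator_of_mem ht, intervalIntegral.integral_of_le ht.1.le,
        MeasureTheory.integral_Ioc_eq_integral_Ioo]
    · have hslice : (fun s => Φ (s, t)) = fun _ => (0:ℝ) := by
        funext s
        refine Set.indicator_of_notMem ?_ _
        rintro ⟨h1, h2, h3⟩
        exact ht ⟨lt_trans h1 h2, h3⟩
      rw [hslice, Set.indicator_of_notMem ht, MeasureTheory.integral_zero]
  calc (∫ s in (0:ℝ)..T, ∫ t in s..T, φ s t)
      = ∫ s : ℝ, (Ioc (0:ℝ) T).indicator (fun s => ∫ t in s..T, φ s t) s := by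
        rw [MeasureTheory.integral_indicator measurableSet_Ioc,
          intervalIntegral.integral_of_le hT]
    _ = ∫ s : ℝ, ∫ t : ℝ, Φ (s, t) := by
        congr 1; funext s; rw [hleft s]
    _ = ∫ t : ℝ, ∫ s : ℝ, Φ (s, t) := key
    _ = ∫ t : ℝ, (Ioc (0:ℝ) T).indicator (fun t => ∫ s in (0:ℝ)..t, φ s t) t := by
        congr 1; funext t; rw [hright t]
    _ = ∫ t in (0:ℝ)..T, ∫ s in (0:ℝ)..t, φ s t := by
        rw [MeasureTheory.integral_indicator measurableSet_Ioc,
          intervalIntegral.integral_of_le hT]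

lemma exp_int {c : ℝ} (hc : 0 < c) (b : ℝ) :
    (∫ s in (0:ℝ)..b, Real.exp (-(c*s))) = (1 - Real.exp (-(c*b))) / c := by
  have : ∀ s ∈ uIcc (0:ℝ) b, HasDerivAt (fun s => -(Real.exp (-(c*s)) / c)) (Real.exp (-(c*s))) s := by
    intro s _
    have h1 : HasDerivAt (fun s : ℝ => -(c*s)) (-c) s := by
      simpa using ((hasDerivAt_id s).const_mul (-c))
    refine (((h1.exp).div_const c).neg).congr_deriv ?_
    rw [mul_neg, neg_div, neg_neg, mul_div_assoc, div_self hc.ne', mul_one]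
  rw [intervalIntegral.integral_eq_sub_of_hasDerivAt this
    ((by fun_prop : Continuous fun s => Real.exp (-(c*s))).intervalIntegrable 0 b)]
  field_simp
  rw [mul_zero, neg_zero, Real.exp_zero]
  ring

lemma deriv_zero_on {T : ℝ} (hT : 0 < T) (g : ℝ → ℝ) (hg : Continuous g)
    (h : ∀ t ∈ Icc (0:ℝ) T, (∫ u in (0:ℝ)..t, g u) = 0) :
    ∀ t ∈ Icc (0:ℝ) T, g t = 0 := by
  have hIoo : ∀ t ∈ Ioo (0:ℝ) T, g t = 0 := by
    intro t ht
    have hd : HasDerivAt (fun t => ∫ u in (0:ℝ)..t, g u) (g t) t :=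
      intervalIntegral.integral_hasDerivAt_right (hg.intervalIntegrable _ _)
        (hg.stronglyMeasurableAtFilter _ _) hg.continuousAt
    have hev : (fun t => ∫ u in (0:ℝ)..t, g u) =ᶠ[nhds t] (fun _ => (0:ℝ)) := by
      filter_upwards [Ioo_mem_nhds ht.1 ht.2] with u hu
      exact h u (Ioo_subset_Icc_self hu)
    have hd0 : HasDerivAt (fun _ : ℝ => (0:ℝ)) (g t) t := hd.congr_of_eventuallyEq hev.symm
    exact (hd0.unique (hasDerivAt_const t 0))
  intro t ht
  have hsub : Icc (0:ℝ) T ⊆ {x | g x = 0} := by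
    rw [← closure_Ioo hT.ne]
    exact closure_minimal (fun x hx => hIoo x hx) (isClosed_eq hg continuous_const)
  exact hsub ht

lemma entire_laplace {T : ℝ} (hT : 0 ≤ T) (ψ : ℝ → ℝ) (hψ : Continuous ψ) {M : ℝ}
    (hM : ∀ u ∈ Icc (0:ℝ) T, |ψ u| ≤ M) :
    Differentiable ℂ (fun z : ℂ => ∫ u in (0:ℝ)..T, Complex.exp (z * u) * (ψ u : ℂ)) := by
  have hrw : (fun z : ℂ => ∫ u in (0:ℝ)..T, Complex.exp (z * u) * (ψ u : ℂ))
      = fun z : ℂ => ∫ u in Ioc (0:ℝ) T, Complex.exp (z * u) * (ψ u : ℂ) := by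
    funext z; exact intervalIntegral.integral_of_le hT
  rw [hrw]
  intro z₀
  have cont : ∀ z : ℂ, Continuous fun u : ℝ => Complex.exp (z * u) * (ψ u : ℂ) := by
    intro z; fun_prop
  have cont' : Continuous fun u : ℝ => (u : ℂ) * Complex.exp (z₀ * u) * (ψ u : ℂ) := by
    fun_prop
  have key := _root_.hasDerivAt_integral_of_dominated_loc_of_deriv_le (hs := Metric.ball_mem_nhds z₀ one_pos)
    (μ := volume.restrict (Ioc (0:ℝ) T))
    (F := fun z (u : ℝ) => Complex.exp (z * u) * (ψ u : ℂ))
    (F' := fun z (u : ℝ) => (u : ℂ) * Complex.exp (z * u) * (ψ u : ℂ))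
    (x₀ := z₀)
    (bound := fun _ => (T + 1) * Real.exp ((‖z₀‖ + 1) * T) * (|M| + 1))
    (Filter.Eventually.of_forall fun z => (cont z).aestronglyMeasurable)
    ((cont z₀).integrableOn_Ioc)
    (cont'.aestronglyMeasurable)
    ?_ (integrable_const _) ?_
  · exact key.2.differentiableAt
  · rw [ae_restrict_iff' measurableSet_Ioc]
    refine Filter.Eventually.of_forall fun u hu => fun z hz => ?_
    have hu0 : 0 ≤ u := hu.1.le
    have huT : u ≤ T := hu.2
    have hz' : ‖z‖ ≤ ‖z₀‖ + 1 := by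
      calc ‖z‖ ≤ ‖z₀‖ + ‖z - z₀‖ := by
            have := norm_add_le (z - z₀) z₀; simpa [add_comm] using this
        _ ≤ ‖z₀‖ + 1 := by
            have := mem_ball_iff_norm.mp hz; linarith [this.le]
    have h1 : ‖Complex.exp (z * u)‖ ≤ Real.exp ((‖z₀‖ + 1) * T) := by
      rw [Complex.norm_exp]
      apply Real.exp_le_exp.2
      have : (z * u).re = z.re * u := by simp
      rw [this]
      calc z.re * u ≤ |z.re| * u := by
            apply mul_le_mul_of_nonneg_right (le_abs_self _) hu0
        _ ≤ (‖z₀‖ + 1) * T := by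
            apply mul_le_mul _ huT hu0 (by positivity)
            exact le_trans (Complex.abs_re_le_norm z) hz'
    have hb := hM u ⟨hu0, huT⟩
    have hψb : |ψ u| ≤ |M| + 1 := le_trans hb (by linarith [le_abs_self M])
    calc ‖(u : ℂ) * Complex.exp (z * u) * (ψ u : ℂ)‖
        = u * ‖Complex.exp (z * u)‖ * |ψ u| := by
          rw [norm_mul, norm_mul]
          simp [Complex.norm_real, Real.norm_eq_abs, _root_.abs_of_nonneg hu0]
      _ ≤ (T + 1) * Real.exp ((‖z₀‖ + 1) * T) * (|M| + 1) := by
          have h2 : u * ‖Complex.exp (z * u)‖ ≤ (T + 1) * Real.exp ((‖z₀‖ + 1) * T) :=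
            mul_le_mul (by linarith) h1 (norm_nonneg _) (by linarith)
          exact mul_le_mul h2 hψb (abs_nonneg _) (by positivity)
  · refine Filter.Eventually.of_forall fun u => fun z hz => ?_
    have h1 : HasDerivAt (fun z : ℂ => z * u) (u : ℂ) z := by
      simpa using (hasDerivAt_id z).mul_const (u : ℂ)
    have := (h1.cexp).mul_const (ψ u : ℂ)
    refine this.congr_deriv ?_
    ring

lemma entire_const_of_halfplane_bounds {Ψ : ℂ → ℂ} (hd : Differentiable ℂ Ψ) {C₁ C₂ B : ℝ}
    (hleft : ∀ z : ℂ, z.re ≤ 0 → ‖Ψ z‖ ≤ C₁)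
    (hright : ∀ x : ℝ, 0 ≤ x → ‖Ψ x‖ ≤ C₂)
    (hgrow : ∀ z : ℂ, ‖Ψ z‖ ≤ C₁ * Real.exp (B * ‖z‖)) :
    ∀ z : ℂ, Ψ z = Ψ 0 := by
  set C : ℝ := max C₁ C₂ with hC
  have hre : ∀ x : ℝ, 0 ≤ x → ‖Ψ x‖ ≤ C := fun x hx => le_trans (hright x hx) (le_max_right _ _)
  have him : ∀ x : ℝ, ‖Ψ (x * I)‖ ≤ C := by
    intro x
    refine le_trans (hleft _ ?_) (le_max_left _ _)
    simp
  have hBig : ∀ s : Set ℂ, Ψ =O[Bornology.cobounded ℂ ⊓ Filter.principal s]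
      fun z => Real.exp (B * ‖z‖ ^ (1:ℝ)) := by
    intro s
    refine Asymptotics.IsBigO.of_bound C₁ (Filter.Eventually.of_forall fun z => ?_)
    rw [Real.rpow_one, Real.norm_eq_abs, Real.abs_exp]
    exact hgrow z
  have hbound : ∀ z : ℂ, ‖Ψ z‖ ≤ C := by
    intro z
    rcases le_or_gt z.re 0 with h | h
    · exact le_trans (hleft z h) (le_max_left _ _)
    · rcases le_or_gt 0 z.im with him' | him'
      · exact PhragmenLindelof.quadrant_I (hd.diffContOnCl)
          ⟨1, one_lt_two, B, hBig _⟩ hre (fun x _ => him x) h.le him'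
      · exact PhragmenLindelof.quadrant_IV (hd.diffContOnCl)
          ⟨1, one_lt_two, B, hBig _⟩ hre (fun x _ => him x) h.le him'.le
  intro z
  apply hd.apply_eq_apply_of_bounded
  rw [Metric.isBounded_iff_subset_closedBall 0]
  exact ⟨C, by rintro w ⟨z', rfl⟩; simpa [Metric.mem_closedBall, dist_eq_norm] using hbound z'⟩

lemma laplace_moments_zero {T : ℝ} (hT : 0 < T) (ψ : ℝ → ℝ) (hψ : Continuous ψ)
    (h : ∀ n : ℕ, (∫ u in (0:ℝ)..T, Real.exp (-(n:ℝ) * u) * ψ u) = 0) :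
    ∀ u ∈ Icc (0:ℝ) T, ψ u = 0 := by
  have huIcc : uIcc (0:ℝ) T = Icc 0 T := uIcc_of_le hT.le
  -- the subalgebra generated by `exp (-x)`
  set e : C(Icc (0:ℝ) T, ℝ) := ⟨fun x => Real.exp (-(x:ℝ)), by fun_prop⟩ with he
  set A : Subalgebra ℝ C(Icc (0:ℝ) T, ℝ) := Algebra.adjoin ℝ {e} with hA
  have sep : A.SeparatesPoints := by
    intro x y hxy
    refine ⟨_, ⟨e, Algebra.subset_adjoin (Set.mem_singleton e), rfl⟩, ?_⟩
    simp only [he, ContinuousMap.coe_mk]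
    intro hcontra
    exact hxy (Subtype.ext (by
      have := Real.exp_injective hcontra
      linarith [neg_injective this]))
  -- the functional q ↦ ∫ q * ψ
  set J : C(Icc (0:ℝ) T, ℝ) → ℝ :=
    fun q => ∫ u in (0:ℝ)..T, q (projIcc 0 T hT.le u) * ψ u with hJ
  -- J vanishes on A
  have hJA : ∀ q ∈ A, J q = 0 := by
    intro q hq
    rw [hA, Algebra.adjoin_singleton_eq_range_aeval] at hq
    obtain ⟨p, rfl⟩ := hq
    have hpt : ∀ u ∈ Icc (0:ℝ) T, (Polynomial.aeval e p) (projIcc 0 T hT.le u) * ψ u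
        = ∑ i ∈ Finset.range (p.natDegree + 1),
            p.coeff i * (Real.exp (-(i:ℝ) * u) * ψ u) := by
      intro u hu
      have h1 : (Polynomial.aeval e p) (projIcc 0 T hT.le u)
          = Polynomial.aeval (e (projIcc 0 T hT.le u)) p :=
        (Polynomial.aeval_algHom_apply (ContinuousMap.evalAlgHom ℝ ℝ (projIcc 0 T hT.le u)) e p).symm
      have h2 : e (projIcc 0 T hT.le u) = Real.exp (-u) := by
        simp only [he, ContinuousMap.coe_mk]
        rw [projIcc_of_mem hT.le hu]
      rw [h1, h2, Polynomial.aeval_eq_sum_range, Finset.sum_mul]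
      congr 1; funext i
      rw [smul_eq_mul, ← Real.exp_nat_mul]
      ring_nf
    calc J (Polynomial.aeval e p)
        = ∫ u in (0:ℝ)..T, ∑ i ∈ Finset.range (p.natDegree + 1),
            p.coeff i * (Real.exp (-(i:ℝ) * u) * ψ u) := by
          apply intervalIntegral.integral_congr
          intro u hu
          exact hpt u (huIcc ▸ hu)
      _ = ∑ i ∈ Finset.range (p.natDegree + 1),
            ∫ u in (0:ℝ)..T, p.coeff i * (Real.exp (-(i:ℝ) * u) * ψ u) := by
          apply intervalIntegral.integral_finset_sum
          intro i _
          exact (by fun_prop : Continuous fun u : ℝ =>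
            p.coeff i * (Real.exp (-(i:ℝ) * u) * ψ u)).intervalIntegrable _ _
      _ = 0 := by
          apply Finset.sum_eq_zero
          intro i _
          rw [intervalIntegral.integral_const_mul, h i, mul_zero]
  -- closure of A is everything; ψ (restricted) is in the closure
  have htop := ContinuousMap.subalgebra_topologicalClosure_eq_top_of_separatesPoints A sep
  set ψc : C(Icc (0:ℝ) T, ℝ) := ⟨fun x => ψ x, by fun_prop⟩ with hψc
  have hmem : ψc ∈ closure (A : Set C(Icc (0:ℝ) T, ℝ)) := by
    have : ψc ∈ A.topologicalClosure := by rw [htop]; exact Algebra.mem_top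
    exact this
  obtain ⟨q, hqA, hqlim⟩ := mem_closure_iff_seq_limit.mp hmem
  -- bound for ψ
  obtain ⟨M, hM⟩ : ∃ M, ∀ u ∈ Icc (0:ℝ) T, |ψ u| ≤ M := by
    obtain ⟨M, hM⟩ := (isCompact_Icc.image_of_continuousOn
      (hψ.continuousOn (s := Icc (0:ℝ) T))).isBounded.subset_closedBall 0
    exact ⟨M, fun u hu => by
      have := hM ⟨u, hu, rfl⟩
      simpa [Metric.mem_closedBall, Real.dist_eq] using this⟩
  -- J is continuous along the sequence
  have hJlim : Filter.Tendsto (fun n => J (q n)) Filter.atTop (nhds (J ψc)) := by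
    rw [Metric.tendsto_atTop]
    intro ε hε
    rw [Metric.tendsto_atTop] at hqlim
    have hMpos : 0 < (|M| + 1) * (T + 1) := by positivity
    obtain ⟨N, hN⟩ := hqlim (ε / ((|M| + 1) * (T + 1))) (by positivity)
    refine ⟨N, fun n hn => ?_⟩
    have hqn := hN n hn
    rw [Real.dist_eq]
    have key : |J (q n) - J ψc| ≤ dist (q n) ψc * ((|M| + 1) * T) := by
      rw [hJ]
      rw [← intervalIntegral.integral_sub]
      · have hb : ∀ u ∈ Set.uIoc (0:ℝ) T,
            ‖(q n) (projIcc 0 T hT.le u) * ψ u - ψc (projIcc 0 T hT.le u) * ψ u‖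
              ≤ dist (q n) ψc * (|M| + 1) := by
          intro u hu
          have hu' : u ∈ Icc (0:ℝ) T := by
            rw [Set.uIoc_of_le hT.le] at hu
            exact ⟨hu.1.le, hu.2⟩
          rw [← sub_mul, Real.norm_eq_abs, abs_mul]
          have h1 : |(q n) (projIcc 0 T hT.le u) - ψc (projIcc 0 T hT.le u)| ≤ dist (q n) ψc := by
            have := ContinuousMap.dist_apply_le_dist (f := q n) (g := ψc) (projIcc 0 T hT.le u)
            rwa [Real.dist_eq] at this
          have h2 : |ψ u| ≤ |M| + 1 := le_trans (hM u hu') (by linarith [le_abs_self M])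
          exact mul_le_mul h1 h2 (abs_nonneg _) dist_nonneg
        have := intervalIntegral.norm_integral_le_of_norm_le_const hb
        simpa [abs_of_pos hT, mul_comm, mul_assoc] using this
      · exact (((q n).continuous.comp (continuous_projIcc)).mul hψ).intervalIntegrable _ _
      · exact ((ψc.continuous.comp (continuous_projIcc)).mul hψ).intervalIntegrable _ _
    calc |J (q n) - J ψc| ≤ dist (q n) ψc * ((|M| + 1) * T) := key
      _ < ε / ((|M| + 1) * (T + 1)) * ((|M| + 1) * (T + 1)) := by
          apply lt_of_le_of_lt (b := dist (q n) ψc * ((|M| + 1) * (T + 1)))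
          · apply mul_le_mul_of_nonneg_left _ dist_nonneg
            have : (0:ℝ) ≤ |M| + 1 := by positivity
            nlinarith
          · apply mul_lt_mul_of_pos_right hqn hMpos
      _ = ε := by field_simp
  have hJψ : J ψc = 0 := by
    have : (fun n => J (q n)) = fun _ => (0:ℝ) := funext fun n => hJA (q n) (hqA n)
    rw [this] at hJlim
    exact (tendsto_nhds_unique tendsto_const_nhds hJlim).symm
  -- hence ∫ ψ² = 0
  have hsq : (∫ u in (0:ℝ)..T, ψ u ^ 2) = 0 := by
    have heq : (∫ u in (0:ℝ)..T, ψ u ^ 2) = J ψc := by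
      apply intervalIntegral.integral_congr
      intro u hu
      have hu' : u ∈ Icc (0:ℝ) T := huIcc ▸ hu
      simp only [hψc, ContinuousMap.coe_mk]
      rw [projIcc_of_mem hT.le hu']
      ring
    rw [heq]
    exact hJψ
  -- conclude pointwise
  intro x hx
  by_contra hne
  have hm : 0 < ψ x ^ 2 / 2 := by positivity
  have hev : ∀ᶠ u in nhds x, ψ x ^ 2 / 2 < ψ u ^ 2 := by
    have hcont : Continuous fun u => ψ u ^ 2 := by fun_prop
    exact hcont.continuousAt.eventually (eventually_gt_nhds (by linarith : ψ x ^ 2 / 2 < ψ x ^ 2))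
  obtain ⟨ε, hε, hball⟩ := Metric.eventually_nhds_iff.mp hev
  set c : ℝ := max 0 (x - ε/2) with hc
  set d : ℝ := min T (x + ε/2) with hd
  have hcd : c < d := by
    apply max_lt
    · apply lt_min hT (by linarith [hx.1])
    · apply lt_min (by linarith [hx.2]) (by linarith)
  have hsub : ∀ u ∈ Icc c d, ψ x ^ 2 / 2 ≤ ψ u ^ 2 := by
    intro u hu
    apply le_of_lt
    apply hball
    rw [Real.dist_eq, abs_sub_lt_iff]
    constructor
    · have := hu.2; have : u ≤ x + ε/2 := le_trans hu.2 (min_le_right _ _); linarith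
    · have : x - ε/2 ≤ u := le_trans (le_max_right _ _) hu.1; linarith
  have hint1 : (∫ u in c..d, ψ x ^ 2 / 2) ≤ ∫ u in c..d, ψ u ^ 2 := by
    apply intervalIntegral.integral_mono_on hcd.le
    · exact intervalIntegrable_const
    · exact ((by fun_prop : Continuous fun u => ψ u ^ 2)).intervalIntegrable _ _
    · exact hsub
  have hint2 : (∫ u in c..d, ψ u ^ 2) ≤ ∫ u in (0:ℝ)..T, ψ u ^ 2 := by
    apply intervalIntegral.integral_mono_interval (le_max_left _ _) hcd.le (min_le_left _ _)
    · exact Filter.Eventually.of_forall fun u => sq_nonneg _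
    · exact ((by fun_prop : Continuous fun u => ψ u ^ 2)).intervalIntegrable _ _
  rw [intervalIntegral.integral_const, smul_eq_mul] at hint1
  have : 0 < (d - c) * (ψ x ^ 2 / 2) := mul_pos (by linarith) hm
  linarith [hsq ▸ le_trans hint1 hint2]


set_option maxHeartbeats 4000000 in
/-- If `R, Z` are continuous on `[0,T]`, their convolution vanishes identically on `[0,T]`,
and `R 0 ≠ 0`, then `Z = 0` on `[0,T]`. -/
theorem stmt_5 (T : ℝ) (hT : 0 < T) (R Z : ℝ → ℝ)
    (hR : ContinuousOn R (Set.Icc 0 T)) (hZ : ContinuousOn Z (Set.Icc 0 T))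
    (hconv : ∀ t ∈ Set.Icc (0 : ℝ) T, (∫ s in (0 : ℝ)..t, R s * Z (t - s)) = 0)
    (hR0 : R 0 ≠ 0) :
    ∀ s ∈ Set.Icc (0 : ℝ) T, Z s = 0 := by
  have hT0 : (0:ℝ) ≤ T := hT.le
  -- continuous extensions of `R` and `Z` to all of `ℝ`
  set f : ℝ → ℝ := Set.IccExtend hT0 ((Set.Icc (0:ℝ) T).restrict R) with hfdef
  set g : ℝ → ℝ := Set.IccExtend hT0 ((Set.Icc (0:ℝ) T).restrict Z) with hgdef
  have hfc : Continuous f := hR.restrict.Icc_extend'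
  have hgc : Continuous g := hZ.restrict.Icc_extend'
  have hfeq : ∀ x ∈ Set.Icc (0:ℝ) T, f x = R x := by
    intro x hx
    rw [hfdef, Set.IccExtend_of_mem hT0 _ hx]
    rfl
  have hgeq : ∀ x ∈ Set.Icc (0:ℝ) T, g x = Z x := by
    intro x hx
    rw [hgdef, Set.IccExtend_of_mem hT0 _ hx]
    rfl
  -- bounds on `Icc 0 T` for continuous functions
  have bdd : ∀ h : ℝ → ℝ, Continuous h → ∃ M : ℝ, 0 ≤ M ∧ ∀ x ∈ Set.Icc (0:ℝ) T, |h x| ≤ M := by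
    intro h hc
    obtain ⟨M, hM⟩ := (isCompact_Icc.image_of_continuousOn
      (hc.continuousOn (s := Set.Icc (0:ℝ) T))).isBounded.subset_closedBall 0
    refine ⟨max M 0, le_max_right _ _, fun x hx => ?_⟩
    have := hM ⟨x, hx, rfl⟩
    simp only [Metric.mem_closedBall, Real.dist_eq, sub_zero] at this
    exact le_trans this (le_max_left _ _)
  obtain ⟨Mf, hMf0, hMfIcc⟩ := bdd f hfc
  have hMf : ∀ x : ℝ, |f x| ≤ Mf := by
    intro x
    have hmem := (Set.projIcc (0:ℝ) T hT0 x).2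
    have hx : f x = f ↑(Set.projIcc (0:ℝ) T hT0 x) := by
      rw [hfdef, Set.IccExtend_apply, Set.IccExtend_of_mem hT0 _ hmem]
      rfl
    rw [hx]
    exact hMfIcc _ hmem
  -- iterated primitives of `g`
  set Z1 : ℝ → ℝ := fun t => ∫ u in (0:ℝ)..t, g u with hZ1def
  have hZ1deriv : ∀ t : ℝ, HasDerivAt Z1 (g t) t := fun t =>
    intervalIntegral.integral_hasDerivAt_right (hgc.intervalIntegrable _ _)
      (hgc.stronglyMeasurableAtFilter _ _) hgc.continuousAt
  have hZ1diff : Differentiable ℝ Z1 := fun t => (hZ1deriv t).differentiableAt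
  have hZ1c : Continuous Z1 := hZ1diff.continuous
  set Z2 : ℝ → ℝ := fun t => ∫ u in (0:ℝ)..t, Z1 u with hZ2def
  have hZ2deriv : ∀ t : ℝ, HasDerivAt Z2 (Z1 t) t := fun t =>
    intervalIntegral.integral_hasDerivAt_right (hZ1c.intervalIntegrable _ _)
      (hZ1c.stronglyMeasurableAtFilter _ _) hZ1c.continuousAt
  have hZ2diff : Differentiable ℝ Z2 := fun t => (hZ2deriv t).differentiableAt
  have hZ2c : Continuous Z2 := hZ2diff.continuous
  obtain ⟨MZ1, hMZ10, hMZ1⟩ := bdd Z1 hZ1c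
  obtain ⟨MZ2, hMZ20, hMZ2⟩ := bdd Z2 hZ2c
  -- convolution identity for the extensions
  have hconv' : ∀ t ∈ Set.Icc (0:ℝ) T, (∫ s in (0:ℝ)..t, f s * g (t - s)) = 0 := by
    intro t ht
    have heq : EqOn (fun s => f s * g (t - s)) (fun s => R s * Z (t - s)) (Set.uIcc 0 t) := by
      intro s hs
      rw [Set.uIcc_of_le ht.1] at hs
      simp only
      rw [hfeq s ⟨hs.1, le_trans hs.2 ht.2⟩,
        hgeq (t - s) ⟨by linarith [hs.2], by linarith [hs.1, ht.2]⟩]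
    rw [intervalIntegral.integral_congr heq, hconv t ht]
  -- convolution of `f` with the primitive `Z1` also vanishes
  have hconv1 : ∀ t ∈ Set.Icc (0:ℝ) T, (∫ s in (0:ℝ)..t, f s * Z1 (t - s)) = 0 := by
    intro t ht
    have step1 : ∀ s : ℝ, f s * Z1 (t - s) = ∫ τ in s..t, f s * g (τ - s) := by
      intro s
      rw [intervalIntegral.integral_const_mul]
      congr 1
      show (∫ u in (0:ℝ)..(t - s), g u) = _
      symm
      rw [intervalIntegral.integral_comp_sub_right (fun u => g u) s]
      norm_num
    calc (∫ s in (0:ℝ)..t, f s * Z1 (t - s))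
        = ∫ s in (0:ℝ)..t, ∫ τ in s..t, f s * g (τ - s) :=
          intervalIntegral.integral_congr (fun s _ => step1 s)
      _ = ∫ τ in (0:ℝ)..t, ∫ s in (0:ℝ)..τ, f s * g (τ - s) :=
          swap_tri ht.1 _ (by fun_prop)
      _ = 0 := by
          have h0 : EqOn (fun τ => ∫ s in (0:ℝ)..τ, f s * g (τ - s)) (fun _ => (0:ℝ))
              (Set.uIcc (0:ℝ) t) := by
            intro τ hτ
            rw [Set.uIcc_of_le ht.1] at hτ
            exact hconv' τ ⟨hτ.1, le_trans hτ.2 ht.2⟩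
          rw [intervalIntegral.integral_congr h0]
          simp
  -- real Laplace transforms
  set Ft : ℝ → ℝ := fun l => ∫ s in (0:ℝ)..T, Real.exp (-(l*s)) * f s with hFtdef
  set L1 : ℝ → ℝ := fun l => ∫ u in (0:ℝ)..T, Real.exp (-(l*u)) * Z1 u with hL1def
  set L2 : ℝ → ℝ := fun l => ∫ u in (0:ℝ)..T, Real.exp (-(l*u)) * Z2 u with hL2def
  set A : ℝ := Mf * MZ1 * T * T with hAdef
  have hA0 : 0 ≤ A := by positivity
  have hprod : ∀ l : ℝ, 0 ≤ l → |Ft l * L1 l| ≤ A * Real.exp (-(l*T)) := by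
    intro l hl
    set P : ℝ → ℝ := fun x => ∫ u in (0:ℝ)..x, Real.exp (-(l*u)) * Z1 u with hPdef
    have hinteg : Continuous fun u => Real.exp (-(l*u)) * Z1 u := by fun_prop
    have hPderiv : ∀ x : ℝ, HasDerivAt P (Real.exp (-(l*x)) * Z1 x) x := fun x =>
      intervalIntegral.integral_hasDerivAt_right (hinteg.intervalIntegrable _ _)
        (hinteg.stronglyMeasurableAtFilter _ _) hinteg.continuousAt
    have hPdiff : Differentiable ℝ P := fun x => (hPderiv x).differentiableAt
    have hPc : Continuous P := hPdiff.continuous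
    have hcov : ∀ s : ℝ, (Real.exp (-(l*s)) * f s) * P (T - s)
        = ∫ τ in s..T, Real.exp (-(l*τ)) * (f s * Z1 (τ - s)) := by
      intro s
      have h1 : P (T - s) = ∫ τ in s..T, Real.exp (-(l*(τ - s))) * Z1 (τ - s) := by
        show (∫ u in (0:ℝ)..(T - s), Real.exp (-(l*u)) * Z1 u) = _
        symm
        rw [intervalIntegral.integral_comp_sub_right (fun u => Real.exp (-(l*u)) * Z1 u) s]
        norm_num
      rw [h1, ← intervalIntegral.integral_const_mul]
      apply intervalIntegral.integral_congr
      intro τ _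
      have hexp : Real.exp (-(l*s)) * Real.exp (-(l*(τ - s))) = Real.exp (-(l*τ)) := by
        rw [← Real.exp_add]; ring_nf
      show (Real.exp (-(l*s)) * f s) * (Real.exp (-(l*(τ - s))) * Z1 (τ - s)) = _
      calc (Real.exp (-(l*s)) * f s) * (Real.exp (-(l*(τ - s))) * Z1 (τ - s))
          = (Real.exp (-(l*s)) * Real.exp (-(l*(τ - s)))) * (f s * Z1 (τ - s)) := by ring
        _ = Real.exp (-(l*τ)) * (f s * Z1 (τ - s)) := by rw [hexp]
    have hc1 : Continuous fun s => (Real.exp (-(l*s)) * f s) * P (T - s) := by fun_prop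
    have hc2 : Continuous fun s => (Real.exp (-(l*s)) * f s) * (P T - P (T - s)) := by fun_prop
    have hsplit : Ft l * L1 l
        = (∫ s in (0:ℝ)..T, (Real.exp (-(l*s)) * f s) * P (T - s))
          + ∫ s in (0:ℝ)..T, (Real.exp (-(l*s)) * f s) * (P T - P (T - s)) := by
      rw [← intervalIntegral.integral_add (hc1.intervalIntegrable _ _) (hc2.intervalIntegrable _ _)]
      have : Ft l * L1 l = ∫ s in (0:ℝ)..T, (Real.exp (-(l*s)) * f s) * P T := by
        rw [intervalIntegral.integral_mul_const]
      rw [this]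
      apply intervalIntegral.integral_congr
      intro s _
      ring
    have hmain : (∫ s in (0:ℝ)..T, (Real.exp (-(l*s)) * f s) * P (T - s)) = 0 := by
      rw [intervalIntegral.integral_congr
        (g := fun s => ∫ τ in s..T, Real.exp (-(l*τ)) * (f s * Z1 (τ - s)))
        (fun s _ => hcov s)]
      rw [swap_tri hT0 _ (by fun_prop)]
      have h0 : EqOn (fun τ => ∫ s in (0:ℝ)..τ, Real.exp (-(l*τ)) * (f s * Z1 (τ - s)))
          (fun _ => (0:ℝ)) (Set.uIcc (0:ℝ) T) := by
        intro τ hτ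
        rw [Set.uIcc_of_le hT0] at hτ
        simp only
        rw [intervalIntegral.integral_const_mul, hconv1 τ hτ, mul_zero]
      rw [intervalIntegral.integral_congr h0]
      simp
    have hcorner : |∫ s in (0:ℝ)..T, (Real.exp (-(l*s)) * f s) * (P T - P (T - s))|
        ≤ A * Real.exp (-(l*T)) := by
      have hpt : ∀ s ∈ Set.uIoc (0:ℝ) T,
          ‖(Real.exp (-(l*s)) * f s) * (P T - P (T - s))‖ ≤ Mf * MZ1 * T * Real.exp (-(l*T)) := by
        intro s hs
        rw [Set.uIoc_of_le hT0] at hs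
        have hs0 : 0 < s := hs.1
        have hsT : s ≤ T := hs.2
        have hPsub : P T - P (T - s) = ∫ u in (T - s)..T, Real.exp (-(l*u)) * Z1 u :=
          intervalIntegral.integral_interval_sub_left (hinteg.intervalIntegrable _ _)
            (hinteg.intervalIntegrable _ _)
        have hinner : |∫ u in (T - s)..T, Real.exp (-(l*u)) * Z1 u|
            ≤ (MZ1 * Real.exp (-(l*(T - s)))) * s := by
          have hb : ∀ u ∈ Set.uIoc (T - s) T,
              ‖Real.exp (-(l*u)) * Z1 u‖ ≤ MZ1 * Real.exp (-(l*(T - s))) := by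
            intro u hu
            rw [Set.uIoc_of_le (by linarith : T - s ≤ T)] at hu
            have hu0 : 0 ≤ u := by linarith [hu.1]
            have huT : u ≤ T := hu.2
            rw [Real.norm_eq_abs, abs_mul, Real.abs_exp]
            have he : Real.exp (-(l*u)) ≤ Real.exp (-(l*(T - s))) := by
              apply Real.exp_le_exp.2
              have := mul_le_mul_of_nonneg_left (le_of_lt hu.1) hl
              linarith
            have hz : |Z1 u| ≤ MZ1 := hMZ1 u ⟨hu0, huT⟩
            calc Real.exp (-(l*u)) * |Z1 u|
                ≤ Real.exp (-(l*(T - s))) * MZ1 :=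
                  mul_le_mul he hz (abs_nonneg _) (Real.exp_pos _).le
              _ = MZ1 * Real.exp (-(l*(T - s))) := mul_comm _ _
          have := intervalIntegral.norm_integral_le_of_norm_le_const hb
          rw [Real.norm_eq_abs] at this
          have habs : |T - (T - s)| = s := by rw [_root_.abs_of_nonneg (by linarith : (0:ℝ) ≤ T - (T - s))]; ring
          rw [habs] at this
          exact this
        rw [hPsub, Real.norm_eq_abs, abs_mul]
        have h1 : |Real.exp (-(l*s)) * f s| ≤ Real.exp (-(l*s)) * Mf := by
          rw [abs_mul, Real.abs_exp]
          exact mul_le_mul_of_nonneg_left (hMf s) (Real.exp_pos _).le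
        have hexp2 : Real.exp (-(l*s)) * Real.exp (-(l*(T - s))) = Real.exp (-(l*T)) := by
          rw [← Real.exp_add]; ring_nf
        calc |Real.exp (-(l*s)) * f s| * |∫ u in (T - s)..T, Real.exp (-(l*u)) * Z1 u|
            ≤ (Real.exp (-(l*s)) * Mf) * ((MZ1 * Real.exp (-(l*(T - s)))) * s) :=
              mul_le_mul h1 hinner (abs_nonneg _) (by positivity)
          _ = (Mf * MZ1 * s) * (Real.exp (-(l*s)) * Real.exp (-(l*(T - s)))) := by ring
          _ = (Mf * MZ1 * s) * Real.exp (-(l*T)) := by rw [hexp2]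
          _ ≤ Mf * MZ1 * T * Real.exp (-(l*T)) := by
              apply mul_le_mul_of_nonneg_right _ (Real.exp_pos _).le
              exact mul_le_mul_of_nonneg_left hsT (by positivity)
      have := intervalIntegral.norm_integral_le_of_norm_le_const hpt
      rw [Real.norm_eq_abs] at this
      have habs : |T - (0:ℝ)| = T := by rw [_root_.abs_of_nonneg (by linarith : (0:ℝ) ≤ T - 0)]; ring
      rw [habs] at this
      calc |∫ s in (0:ℝ)..T, (Real.exp (-(l*s)) * f s) * (P T - P (T - s))|
          ≤ Mf * MZ1 * T * Real.exp (-(l*T)) * T := this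
        _ = A * Real.exp (-(l*T)) := by rw [hAdef]; ring
    rw [hsplit, hmain, zero_add]
    exact hcorner
  -- lower bound for `Ft`
  have hf0 : f 0 = R 0 := hfeq 0 ⟨le_rfl, hT0⟩
  have hf0ne : f 0 ≠ 0 := by rw [hf0]; exact hR0
  have hf0pos : 0 < |f 0| := abs_pos.2 hf0ne
  obtain ⟨δ', hδ'pos, hδ'⟩ := Metric.continuousAt_iff.mp hfc.continuousAt (|f 0|/4) (by positivity)
  set δ : ℝ := min (δ'/2) T with hδdef
  have hδpos : 0 < δ := lt_min (by linarith) hT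
  have hδT : δ ≤ T := min_le_right _ _
  have hδsmall : ∀ s ∈ Set.Icc (0:ℝ) δ, |f s - f 0| ≤ |f 0|/4 := by
    intro s hs
    have hd : dist s 0 < δ' := by
      rw [Real.dist_eq, sub_zero, _root_.abs_of_nonneg hs.1]
      exact lt_of_le_of_lt hs.2 (lt_of_le_of_lt (min_le_left _ _) (by linarith))
    have := hδ' hd
    rw [Real.dist_eq] at this
    exact this.le
  set l₀ : ℝ := max 1 (max (Real.log 2 / δ) (32 * Mf * T / (|f 0| * δ^2))) with hl₀def
  have hl₀1 : (1:ℝ) ≤ l₀ := le_max_left _ _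
  have hlow : ∀ l : ℝ, l₀ ≤ l → |f 0| / (8 * l) ≤ |Ft l| := by
    intro l hll
    have hl1 : (1:ℝ) ≤ l := le_trans hl₀1 hll
    have hl0 : (0:ℝ) < l := by linarith
    have ce : Continuous fun s => Real.exp (-(l*s)) * f s := by fun_prop
    have ce2 : Continuous fun s => Real.exp (-(l*s)) * (f s - f 0) := by fun_prop
    have ce0 : Continuous fun s : ℝ => Real.exp (-(l*s)) * f 0 := by fun_prop
    have hsplit : Ft l = (∫ s in (0:ℝ)..δ, Real.exp (-(l*s)) * f s)
        + ∫ s in δ..T, Real.exp (-(l*s)) * f s := by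
      show (∫ s in (0:ℝ)..T, Real.exp (-(l*s)) * f s) = _
      rw [intervalIntegral.integral_add_adjacent_intervals (ce.intervalIntegrable 0 δ)
        (ce.intervalIntegrable δ T)]
    have hsplit2 : (∫ s in (0:ℝ)..δ, Real.exp (-(l*s)) * f s)
        = f 0 * ((1 - Real.exp (-(l*δ)))/l)
          + ∫ s in (0:ℝ)..δ, Real.exp (-(l*s)) * (f s - f 0) := by
      have h1 : (∫ s in (0:ℝ)..δ, Real.exp (-(l*s)) * f s)
          = (∫ s in (0:ℝ)..δ, Real.exp (-(l*s)) * f 0)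
            + ∫ s in (0:ℝ)..δ, Real.exp (-(l*s)) * (f s - f 0) := by
        rw [← intervalIntegral.integral_add (ce0.intervalIntegrable 0 δ)
          (ce2.intervalIntegrable 0 δ)]
        apply intervalIntegral.integral_congr
        intro s _
        ring
      rw [h1]
      congr 1
      rw [intervalIntegral.integral_mul_const, exp_int hl0 δ, mul_comm]
    have hexpδ : Real.exp (-(l*δ)) ≤ 1/2 := by
      have h1 : Real.log 2 / δ ≤ l :=
        le_trans (le_trans (le_max_left _ _) (le_max_right 1 _)) hll
      have h2 : Real.log 2 ≤ l * δ := by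
        rw [div_le_iff₀ hδpos] at h1; linarith
      calc Real.exp (-(l*δ)) ≤ Real.exp (-(Real.log 2)) := Real.exp_le_exp.2 (by linarith)
        _ = 1/2 := by rw [Real.exp_neg, Real.exp_log two_pos]; norm_num
    have hexp01 : 0 < Real.exp (-(l*δ)) := Real.exp_pos _
    have hT1 : |f 0| / (2*l) ≤ |f 0 * ((1 - Real.exp (-(l*δ)))/l)| := by
      rw [abs_mul, _root_.abs_of_nonneg
        (div_nonneg (by linarith [Real.exp_pos (-(l*δ))] : (0:ℝ) ≤ 1 - Real.exp (-(l*δ))) hl0.le)]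
      have h5 : 1/(2*l) ≤ (1 - Real.exp (-(l*δ)))/l := by
        rw [div_le_div_iff₀ (by positivity) hl0]
        nlinarith
      calc |f 0|/(2*l) = |f 0| * (1/(2*l)) := by ring
        _ ≤ |f 0| * ((1 - Real.exp (-(l*δ)))/l) := mul_le_mul_of_nonneg_left h5 (abs_nonneg _)
    have hb2 : |∫ s in (0:ℝ)..δ, Real.exp (-(l*s)) * (f s - f 0)| ≤ |f 0|/(4*l) := by
      have h1 := intervalIntegral.norm_integral_le_integral_norm
        (f := fun s => Real.exp (-(l*s)) * (f s - f 0)) (μ := volume) (a := 0) (b := δ) hδpos.le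
      have h2 : (∫ s in (0:ℝ)..δ, ‖Real.exp (-(l*s)) * (f s - f 0)‖)
          ≤ ∫ s in (0:ℝ)..δ, (|f 0|/4) * Real.exp (-(l*s)) := by
        apply intervalIntegral.integral_mono_on hδpos.le (ce2.norm.intervalIntegrable 0 δ)
          ((by fun_prop :
            Continuous fun s : ℝ => (|f 0|/4) * Real.exp (-(l*s))).intervalIntegrable 0 δ)
        intro s hs
        rw [Real.norm_eq_abs, abs_mul, Real.abs_exp]
        calc Real.exp (-(l*s)) * |f s - f 0| ≤ Real.exp (-(l*s)) * (|f 0|/4) :=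
              mul_le_mul_of_nonneg_left (hδsmall s hs) (Real.exp_pos _).le
          _ = (|f 0|/4) * Real.exp (-(l*s)) := mul_comm _ _
      have h3 : (∫ s in (0:ℝ)..δ, (|f 0|/4) * Real.exp (-(l*s)))
          = (|f 0|/4) * ((1 - Real.exp (-(l*δ)))/l) := by
        rw [intervalIntegral.integral_const_mul, exp_int hl0 δ]
      have h4 : (|f 0|/4) * ((1 - Real.exp (-(l*δ)))/l) ≤ |f 0|/(4*l) := by
        have h5 : |f 0| * (1 - Real.exp (-(l*δ))) ≤ |f 0| := by
          nlinarith [Real.exp_pos (-(l*δ)), hf0pos]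
        calc (|f 0|/4) * ((1 - Real.exp (-(l*δ)))/l)
            = (|f 0| * (1 - Real.exp (-(l*δ))))/(4*l) := by ring
          _ ≤ |f 0|/(4*l) := by
              rw [div_le_div_iff₀ (by positivity) (by positivity)]
              exact mul_le_mul_of_nonneg_right h5 (by positivity)
      rw [Real.norm_eq_abs] at h1
      rw [h3] at h2
      linarith [h4]
    have hb3 : |∫ s in δ..T, Real.exp (-(l*s)) * f s| ≤ Mf * T * Real.exp (-(l*δ)) := by
      have hpt : ∀ s ∈ Set.uIoc δ T,
          ‖Real.exp (-(l*s)) * f s‖ ≤ Mf * Real.exp (-(l*δ)) := by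
        intro s hs
        rw [Set.uIoc_of_le hδT] at hs
        rw [Real.norm_eq_abs, abs_mul, Real.abs_exp]
        have he : Real.exp (-(l*s)) ≤ Real.exp (-(l*δ)) := by
          apply Real.exp_le_exp.2
          have := mul_le_mul_of_nonneg_left hs.1.le hl0.le
          linarith
        calc Real.exp (-(l*s)) * |f s| ≤ Real.exp (-(l*δ)) * Mf :=
              mul_le_mul he (hMf s) (abs_nonneg _) (Real.exp_pos _).le
          _ = Mf * Real.exp (-(l*δ)) := mul_comm _ _
      have h1 := intervalIntegral.norm_integral_le_of_norm_le_const hpt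
      rw [Real.norm_eq_abs] at h1
      have habs : |T - δ| = T - δ := _root_.abs_of_nonneg (by linarith)
      rw [habs] at h1
      calc |∫ s in δ..T, Real.exp (-(l*s)) * f s| ≤ Mf * Real.exp (-(l*δ)) * (T - δ) := h1
        _ ≤ Mf * T * Real.exp (-(l*δ)) := by
            nlinarith [mul_nonneg (mul_nonneg hMf0 (Real.exp_pos (-(l*δ))).le) hδpos.le]
    have hb3' : Mf * T * Real.exp (-(l*δ)) ≤ |f 0| / (8*l) := by
      have hld : 0 < l * δ := by positivity
      have hq : (l*δ/2)^2 ≤ Real.exp (l*δ) := by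
        have h1 : l*δ/2 ≤ Real.exp (l*δ/2) := by nlinarith [Real.add_one_le_exp (l*δ/2)]
        calc (l*δ/2)^2 ≤ Real.exp (l*δ/2)^2 := by nlinarith [Real.exp_pos (l*δ/2)]
          _ = Real.exp (l*δ) := by rw [sq, ← Real.exp_add]; ring_nf
      have hEinv : Real.exp (-(l*δ)) * Real.exp (l*δ) = 1 := by
        rw [← Real.exp_add]; simp
      have h8 : Real.exp (-(l*δ)) * (l*δ)^2 ≤ 4 := by
        nlinarith [mul_le_mul_of_nonneg_left hq (Real.exp_pos (-(l*δ))).le]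
      have h6 : 32 * Mf * T / (|f 0| * δ^2) ≤ l :=
        le_trans (le_trans (le_max_right _ _) (le_max_right 1 _)) hll
      have h7 : 32 * Mf * T ≤ l * (|f 0| * δ^2) := by
        rw [div_le_iff₀ (by positivity)] at h6; linarith
      rw [le_div_iff₀ (by positivity : (0:ℝ) < 8*l)]
      nlinarith [mul_le_mul_of_nonneg_right h7
          (mul_nonneg hl0.le (Real.exp_pos (-(l*δ))).le),
        mul_le_mul_of_nonneg_left h8 (abs_nonneg (f 0)),
        hexp01, hl0, hδpos, hf0pos]
    have htotal : f 0 * ((1 - Real.exp (-(l*δ)))/l)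
        = Ft l - (∫ s in (0:ℝ)..δ, Real.exp (-(l*s)) * (f s - f 0))
          - ∫ s in δ..T, Real.exp (-(l*s)) * f s := by
      rw [hsplit, hsplit2]; ring
    have habs2 : |f 0 * ((1 - Real.exp (-(l*δ)))/l)|
        ≤ |Ft l| + |∫ s in (0:ℝ)..δ, Real.exp (-(l*s)) * (f s - f 0)|
          + |∫ s in δ..T, Real.exp (-(l*s)) * f s| := by
      rw [htotal]
      calc |Ft l - (∫ s in (0:ℝ)..δ, Real.exp (-(l*s)) * (f s - f 0))
            - ∫ s in δ..T, Real.exp (-(l*s)) * f s|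
          ≤ |Ft l - ∫ s in (0:ℝ)..δ, Real.exp (-(l*s)) * (f s - f 0)|
            + |∫ s in δ..T, Real.exp (-(l*s)) * f s| := abs_sub _ _
        _ ≤ |Ft l| + |∫ s in (0:ℝ)..δ, Real.exp (-(l*s)) * (f s - f 0)|
            + |∫ s in δ..T, Real.exp (-(l*s)) * f s| := by
            have := abs_sub (Ft l) (∫ s in (0:ℝ)..δ, Real.exp (-(l*s)) * (f s - f 0))
            linarith
    have e1 : |f 0|/(2*l) = |f 0|/(4*l) + |f 0|/(8*l) + |f 0|/(8*l) := by
      field_simp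
      ring
    linarith [hT1, habs2, hb2, hb3, hb3', e1]
  -- bound on L1 for large l
  have hL1bound : ∀ l : ℝ, l₀ ≤ l → |L1 l| ≤ (8 * A / |f 0|) * l * Real.exp (-(l*T)) := by
    intro l hll
    have hl0 : (0:ℝ) < l := lt_of_lt_of_le (by linarith) hll
    have h1 := hprod l hl0.le
    have h2 := hlow l hll
    have h3 : |Ft l| * |L1 l| ≤ A * Real.exp (-(l*T)) := by rw [← abs_mul]; exact h1
    have h4 : (|f 0|/(8*l)) * |L1 l| ≤ A * Real.exp (-(l*T)) :=
      le_trans (mul_le_mul_of_nonneg_right h2 (abs_nonneg _)) h3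
    have h5 : |L1 l| ≤ (A * Real.exp (-(l*T))) * (8*l) / |f 0| := by
      rw [le_div_iff₀ hf0pos]
      calc |L1 l| * |f 0| = (|f 0|/(8*l)) * |L1 l| * (8*l) := by field_simp
        _ ≤ (A * Real.exp (-(l*T))) * (8*l) := mul_le_mul_of_nonneg_right h4 (by positivity)
    calc |L1 l| ≤ (A * Real.exp (-(l*T))) * (8*l) / |f 0| := h5
      _ = (8 * A / |f 0|) * l * Real.exp (-(l*T)) := by field_simp
  -- integration by parts relation between L1 and L2
  have hFTC : ∀ l : ℝ, l * L2 l = L1 l - Real.exp (-(l*T)) * Z2 T := by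
    intro l
    have hderiv : ∀ s ∈ Set.uIcc (0:ℝ) T, HasDerivAt (fun s => -(Real.exp (-(l*s)) * Z2 s))
        (l * (Real.exp (-(l*s)) * Z2 s) - Real.exp (-(l*s)) * Z1 s) s := by
      intro s _
      have h1 : HasDerivAt (fun s : ℝ => -(l*s)) (-l) s := by
        simpa using (hasDerivAt_id s).const_mul (-l)
      have h2 := (h1.exp.mul (hZ2deriv s)).neg
      refine h2.congr_deriv ?_
      ring
    have hint : IntervalIntegrable
        (fun s => l * (Real.exp (-(l*s)) * Z2 s) - Real.exp (-(l*s)) * Z1 s) volume 0 T :=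
      ((by fun_prop : Continuous fun s =>
        l * (Real.exp (-(l*s)) * Z2 s) - Real.exp (-(l*s)) * Z1 s)).intervalIntegrable 0 T
    have h3 := intervalIntegral.integral_eq_sub_of_hasDerivAt hderiv hint
    have h4 : (∫ s in (0:ℝ)..T, (l * (Real.exp (-(l*s)) * Z2 s) - Real.exp (-(l*s)) * Z1 s))
        = l * L2 l - L1 l := by
      rw [intervalIntegral.integral_sub
        (((by fun_prop : Continuous fun s =>
          l * (Real.exp (-(l*s)) * Z2 s))).intervalIntegrable 0 T)
        (((by fun_prop : Continuous fun s =>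
          Real.exp (-(l*s)) * Z1 s)).intervalIntegrable 0 T),
        intervalIntegral.integral_const_mul]
    have h5 : Z2 0 = 0 := intervalIntegral.integral_same
    rw [h4] at h3
    rw [h5] at h3
    simp only [mul_zero, neg_zero, sub_zero] at h3
    linarith [h3]
  -- uniform bound on L2
  obtain ⟨C2, hC20, hL2bound⟩ : ∃ C2 : ℝ, 0 ≤ C2 ∧
      ∀ l : ℝ, 0 ≤ l → |L2 l| ≤ C2 * Real.exp (-(l*T)) := by
    refine ⟨max (8*A/|f 0| + |Z2 T|) (T * MZ2 * Real.exp (l₀*T)),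
      le_trans (by positivity) (le_max_left _ _), fun l hl => ?_⟩
    rcases le_or_gt l₀ l with hcase | hcase
    · have h1 := hL1bound l hcase
      have hl1 : (1:ℝ) ≤ l := le_trans hl₀1 hcase
      have hl0 : (0:ℝ) < l := by linarith
      have h2 := hFTC l
      have h3 : |l * L2 l| ≤ (8*A/|f 0|) * l * Real.exp (-(l*T))
          + Real.exp (-(l*T)) * |Z2 T| := by
        rw [h2]
        calc |L1 l - Real.exp (-(l*T)) * Z2 T|
            ≤ |L1 l| + |Real.exp (-(l*T)) * Z2 T| := abs_sub _ _
          _ ≤ (8*A/|f 0|) * l * Real.exp (-(l*T)) + Real.exp (-(l*T)) * |Z2 T| := by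
              rw [abs_mul, Real.abs_exp]
              linarith [h1]
      rw [abs_mul, _root_.abs_of_nonneg hl] at h3
      have h6 : |L2 l| ≤ (8*A/|f 0| + |Z2 T|) * Real.exp (-(l*T)) := by
        have h5 : l * |L2 l| ≤ l * ((8*A/|f 0| + |Z2 T|) * Real.exp (-(l*T))) := by
          have hAd : (0:ℝ) ≤ 8*A/|f 0| := by positivity
          nlinarith [mul_nonneg (mul_nonneg (by linarith : (0:ℝ) ≤ l - 1)
            (Real.exp_pos (-(l*T))).le) (abs_nonneg (Z2 T))]
        exact le_of_mul_le_mul_left h5 hl0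
      exact le_trans h6 (mul_le_mul_of_nonneg_right (le_max_left _ _) (Real.exp_pos _).le)
    · have hb : |L2 l| ≤ MZ2 * T := by
        have hpt : ∀ u ∈ Set.uIoc (0:ℝ) T, ‖Real.exp (-(l*u)) * Z2 u‖ ≤ MZ2 := by
          intro u hu
          rw [Set.uIoc_of_le hT0] at hu
          rw [Real.norm_eq_abs, abs_mul, Real.abs_exp]
          have he1 : Real.exp (-(l*u)) ≤ 1 := by
            rw [Real.exp_le_one_iff]
            nlinarith [hu.1.le, hl]
          calc Real.exp (-(l*u)) * |Z2 u| ≤ 1 * MZ2 :=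
                mul_le_mul he1 (hMZ2 u ⟨hu.1.le, hu.2⟩) (abs_nonneg _) one_pos.le
            _ = MZ2 := one_mul _
        have h1 := intervalIntegral.norm_integral_le_of_norm_le_const hpt
        rw [Real.norm_eq_abs] at h1
        rw [_root_.abs_of_nonneg (by linarith : (0:ℝ) ≤ T - 0)] at h1
        calc |L2 l| ≤ MZ2 * (T - 0) := h1
          _ = MZ2 * T := by ring
      have hstep : MZ2 * T ≤ (T * MZ2 * Real.exp (l₀*T)) * Real.exp (-(l*T)) := by
        have h1 : Real.exp (l₀*T) * Real.exp (-(l*T)) = Real.exp ((l₀ - l)*T) := by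
          rw [← Real.exp_add]; ring_nf
        have h2 : (1:ℝ) ≤ Real.exp ((l₀ - l)*T) :=
          Real.one_le_exp (by nlinarith [hcase.le])
        calc MZ2 * T = (T * MZ2) * 1 := by ring
          _ ≤ (T * MZ2) * Real.exp ((l₀ - l)*T) :=
              mul_le_mul_of_nonneg_left h2 (by positivity)
          _ = (T * MZ2 * Real.exp (l₀*T)) * Real.exp (-(l*T)) := by rw [← h1]; ring
      exact le_trans hb (le_trans hstep
        (mul_le_mul_of_nonneg_right (le_max_right _ _) (Real.exp_pos _).le))
  -- the complex Laplace transform of `u ↦ Z2 (T - u)`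
  set ψ : ℝ → ℝ := fun u => Z2 (T - u) with hψdef
  have hψc : Continuous ψ := hZ2c.comp (by fun_prop)
  have hψM : ∀ u ∈ Set.Icc (0:ℝ) T, |ψ u| ≤ MZ2 := fun u hu =>
    hMZ2 _ ⟨by linarith [hu.2], by linarith [hu.1]⟩
  set Ψ : ℂ → ℂ := fun z => ∫ u in (0:ℝ)..T, Complex.exp (z * u) * (ψ u : ℂ) with hΨdef
  have hΨd : Differentiable ℂ Ψ := entire_laplace hT0 ψ hψc hψM
  have hΨof : ∀ x : ℝ, Ψ x = ((∫ u in (0:ℝ)..T, Real.exp (x*u) * ψ u : ℝ) : ℂ) := by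
    intro x
    show (∫ u in (0:ℝ)..T, Complex.exp (x * u) * (ψ u : ℂ)) = _
    rw [← intervalIntegral.integral_ofReal]
    apply intervalIntegral.integral_congr
    intro u _
    simp [Complex.ofReal_mul, Complex.ofReal_exp]
  have hΨreal : ∀ x : ℝ, Ψ x = ((Real.exp (x*T) * L2 x : ℝ) : ℂ) := by
    intro x
    rw [hΨof x]
    congr 1
    have hcov : (∫ u in (0:ℝ)..T, Real.exp (x*u) * ψ u)
        = ∫ s in (0:ℝ)..T, Real.exp (x*(T - s)) * Z2 s := by
      have h := intervalIntegral.integral_comp_sub_left (a := (0:ℝ)) (b := T)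
        (fun s => Real.exp (x*(T - s)) * Z2 s) T
      rw [show T - T = (0:ℝ) by ring, show T - (0:ℝ) = T by ring] at h
      rw [← h]
      apply intervalIntegral.integral_congr
      intro u _
      show Real.exp (x*u) * Z2 (T - u) = Real.exp (x*(T - (T - u))) * Z2 (T - u)
      rw [show T - (T - u) = u by ring]
    rw [hcov]
    have hcong : EqOn (fun s => Real.exp (x*(T - s)) * Z2 s)
        (fun s => Real.exp (x*T) * (Real.exp (-(x*s)) * Z2 s)) (Set.uIcc (0:ℝ) T) := by
      intro s _
      show Real.exp (x*(T - s)) * Z2 s = Real.exp (x*T) * (Real.exp (-(x*s)) * Z2 s)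
      rw [← mul_assoc, ← Real.exp_add]
      ring_nf
    rw [intervalIntegral.integral_congr hcong, intervalIntegral.integral_const_mul]
  have hΨleft : ∀ z : ℂ, z.re ≤ 0 → ‖Ψ z‖ ≤ MZ2 * T := by
    intro z hz
    have hpt : ∀ u ∈ Set.uIoc (0:ℝ) T, ‖Complex.exp (z * u) * (ψ u : ℂ)‖ ≤ MZ2 := by
      intro u hu
      rw [Set.uIoc_of_le hT0] at hu
      rw [norm_mul, Complex.norm_exp]
      have hre : (z * (u:ℂ)).re = z.re * u := by simp
      rw [hre]
      have h1 : Real.exp (z.re * u) ≤ 1 := by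
        rw [Real.exp_le_one_iff]
        exact mul_nonpos_of_nonpos_of_nonneg hz hu.1.le
      have h2 : ‖((ψ u : ℝ) : ℂ)‖ ≤ MZ2 := by
        rw [Complex.norm_real, Real.norm_eq_abs]
        exact hψM u ⟨hu.1.le, hu.2⟩
      calc Real.exp (z.re*u) * ‖((ψ u : ℝ) : ℂ)‖ ≤ 1 * MZ2 :=
            mul_le_mul h1 h2 (norm_nonneg _) one_pos.le
        _ = MZ2 := one_mul _
    have h1 := intervalIntegral.norm_integral_le_of_norm_le_const hpt
    rw [sub_zero, _root_.abs_of_nonneg hT0] at h1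
    exact h1
  have hΨgrow : ∀ z : ℂ, ‖Ψ z‖ ≤ (MZ2 * T) * Real.exp (T * ‖z‖) := by
    intro z
    have hpt : ∀ u ∈ Set.uIoc (0:ℝ) T, ‖Complex.exp (z * u) * (ψ u : ℂ)‖
        ≤ MZ2 * Real.exp (T * ‖z‖) := by
      intro u hu
      rw [Set.uIoc_of_le hT0] at hu
      rw [norm_mul, Complex.norm_exp]
      have hre : (z * (u:ℂ)).re = z.re * u := by simp
      rw [hre]
      have h1 : Real.exp (z.re * u) ≤ Real.exp (T * ‖z‖) := by
        apply Real.exp_le_exp.2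
        calc z.re * u ≤ |z.re| * u := mul_le_mul_of_nonneg_right (le_abs_self _) hu.1.le
          _ ≤ ‖z‖ * T :=
              mul_le_mul (Complex.abs_re_le_norm z) hu.2 hu.1.le (norm_nonneg z)
          _ = T * ‖z‖ := mul_comm _ _
      have h2 : ‖((ψ u : ℝ) : ℂ)‖ ≤ MZ2 := by
        rw [Complex.norm_real, Real.norm_eq_abs]
        exact hψM u ⟨hu.1.le, hu.2⟩
      calc Real.exp (z.re*u) * ‖((ψ u : ℝ) : ℂ)‖
          ≤ Real.exp (T * ‖z‖) * MZ2 :=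
            mul_le_mul h1 h2 (norm_nonneg _) (Real.exp_pos _).le
        _ = MZ2 * Real.exp (T * ‖z‖) := mul_comm _ _
    have h1 := intervalIntegral.norm_integral_le_of_norm_le_const hpt
    rw [sub_zero, _root_.abs_of_nonneg hT0] at h1
    calc ‖Ψ z‖ ≤ MZ2 * Real.exp (T * ‖z‖) * T := h1
      _ = (MZ2 * T) * Real.exp (T * ‖z‖) := by ring
  have hΨright : ∀ x : ℝ, 0 ≤ x → ‖Ψ (x:ℂ)‖ ≤ C2 := by
    intro x hx
    rw [hΨreal x, Complex.norm_real, Real.norm_eq_abs, abs_mul, Real.abs_exp]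
    have h1 := hL2bound x hx
    calc Real.exp (x*T) * |L2 x| ≤ Real.exp (x*T) * (C2 * Real.exp (-(x*T))) :=
          mul_le_mul_of_nonneg_left h1 (Real.exp_pos _).le
      _ = C2 * (Real.exp (x*T) * Real.exp (-(x*T))) := by ring
      _ = C2 := by rw [← Real.exp_add]; simp
  have hconst := entire_const_of_halfplane_bounds hΨd hΨleft hΨright hΨgrow
  have hΨ0 : Ψ 0 = 0 := by
    have hdecay : ∀ n : ℕ, ‖Ψ 0‖ ≤ MZ2 / ((n:ℝ)+1) := by
      intro n
      set m : ℝ := (n:ℝ) + 1 with hm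
      have hm0 : (0:ℝ) < m := by positivity
      rw [show Ψ 0 = Ψ ((-m : ℝ) : ℂ) from (hconst _).symm, hΨof (-m),
        Complex.norm_real, Real.norm_eq_abs]
      have h1 := intervalIntegral.norm_integral_le_integral_norm
        (f := fun u => Real.exp ((-m)*u) * ψ u) (μ := volume) (a := 0) (b := T) hT0
      have h2 : (∫ u in (0:ℝ)..T, ‖Real.exp ((-m)*u) * ψ u‖)
          ≤ ∫ u in (0:ℝ)..T, MZ2 * Real.exp (-(m*u)) := by
        apply intervalIntegral.integral_mono_on hT0
          ((by fun_prop : Continuous fun u => Real.exp ((-m)*u) * ψ u).norm.intervalIntegrable 0 T)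
          ((by fun_prop : Continuous fun u : ℝ => MZ2 * Real.exp (-(m*u))).intervalIntegrable 0 T)
        intro u hu
        rw [Real.norm_eq_abs, abs_mul, Real.abs_exp, show (-m)*u = -(m*u) by ring]
        calc Real.exp (-(m*u)) * |ψ u| ≤ Real.exp (-(m*u)) * MZ2 :=
              mul_le_mul_of_nonneg_left (hψM u hu) (Real.exp_pos _).le
          _ = MZ2 * Real.exp (-(m*u)) := mul_comm _ _
      have h3 : (∫ u in (0:ℝ)..T, MZ2 * Real.exp (-(m*u)))
          = MZ2 * ((1 - Real.exp (-(m*T)))/m) := by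
        rw [intervalIntegral.integral_const_mul, exp_int hm0 T]
      have h4 : MZ2 * ((1 - Real.exp (-(m*T)))/m) ≤ MZ2/m := by
        have h5 : MZ2 * (1 - Real.exp (-(m*T))) ≤ MZ2 := by
          nlinarith [Real.exp_pos (-(m*T)), hMZ20]
        calc MZ2 * ((1 - Real.exp (-(m*T)))/m) = (MZ2 * (1 - Real.exp (-(m*T))))/m := by ring
          _ ≤ MZ2/m := by
              rw [div_le_div_iff₀ hm0 hm0]
              exact mul_le_mul_of_nonneg_right h5 hm0.le
      rw [Real.norm_eq_abs] at h1
      linarith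
    have hle : ‖Ψ 0‖ ≤ 0 := by
      by_contra hpos
      push_neg at hpos
      obtain ⟨n, hn⟩ := exists_nat_gt (MZ2 / ‖Ψ 0‖)
      have h1 := hdecay n
      have h2 : MZ2 < ((n:ℝ)+1) * ‖Ψ 0‖ := by
        rw [div_lt_iff₀ hpos] at hn
        nlinarith [hpos]
      rw [le_div_iff₀ (by positivity : (0:ℝ) < (n:ℝ)+1)] at h1
      nlinarith [h1]
    exact norm_eq_zero.mp (le_antisymm hle (norm_nonneg _))
  have hmom : ∀ n : ℕ, (∫ u in (0:ℝ)..T, Real.exp (-(n:ℝ) * u) * ψ u) = 0 := by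
    intro n
    have h1 : Ψ ((-(n:ℝ) : ℝ) : ℂ) = 0 := by rw [hconst, hΨ0]
    rw [hΨof (-(n:ℝ))] at h1
    exact_mod_cast h1
  have hψ0 := laplace_moments_zero hT ψ hψc hmom
  have hZ20 : ∀ t ∈ Set.Icc (0:ℝ) T, Z2 t = 0 := by
    intro t ht
    have h := hψ0 (T - t) ⟨by linarith [ht.2], by linarith [ht.1]⟩
    rw [hψdef] at h
    simp only at h
    rw [show T - (T - t) = t by ring] at h
    exact h
  have hZ10 : ∀ t ∈ Set.Icc (0:ℝ) T, Z1 t = 0 :=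
    deriv_zero_on hT Z1 hZ1c (fun t ht => hZ20 t ht)
  have hg0 : ∀ t ∈ Set.Icc (0:ℝ) T, g t = 0 :=
    deriv_zero_on hT g hgc (fun t ht => hZ10 t ht)
  intro s hs
  rw [← hgeq s hs]
  exact hg0 s hs
end

section
/- Let E be a complex Banach space, A : E → E a continuous linear map, T > 0, R : [0,T] → ℝ continuously differentiable, f ∈ E, and v : [0,T] → E continuously differentiable with i v′(t) + A v(t) = 0 for all t ∈ [0,T] and v(0) = −i f. Then the function y(t) := ∫₀ᵗ R(t−τ) v(τ) dτ satisfies y(0) = 0 and i y′(t) + A y(t) = R(t) f for all t ∈ (0,T). -/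
open MeasureTheory

private lemma triangle_swap16 {E : Type*} [NormedAddCommGroup E] [NormedSpace ℝ E]
    [CompleteSpace E]
    (F : ℝ → ℝ → E) (hF : Continuous (Function.uncurry F)) {t : ℝ} (ht : 0 ≤ t) :
    ∫ s in (0:ℝ)..t, ∫ τ in (0:ℝ)..s, F s τ = ∫ τ in (0:ℝ)..t, ∫ s in τ..t, F s τ := by
  classical
  set S : Set ℝ := Set.Ioc 0 t with hS
  set g : ℝ → ℝ → E :=
    fun s τ => Set.indicator {p : ℝ × ℝ | p.2 ≤ p.1} (Function.uncurry F) (s, τ) with hg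
  have hgmeas : MeasurableSet {p : ℝ × ℝ | p.2 ≤ p.1} :=
    measurableSet_le measurable_snd measurable_fst
  have hInt : Integrable (Function.uncurry g) ((volume.restrict S).prod (volume.restrict S)) := by
    rw [Measure.prod_restrict]
    have h1 : IntegrableOn (Function.uncurry F) (S ×ˢ S) (volume.prod volume) := by
      apply (hF.continuousOn.integrableOn_compact (isCompact_Icc.prod isCompact_Icc :
        IsCompact ((Set.Icc (0:ℝ) t) ×ˢ (Set.Icc (0:ℝ) t)))).mono_set
      exact Set.prod_mono Set.Ioc_subset_Icc_self Set.Ioc_subset_Icc_self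
    have : Function.uncurry g = Set.indicator {p : ℝ × ℝ | p.2 ≤ p.1} (Function.uncurry F) := by
      funext p; simp [hg, Function.uncurry]
    rw [this]
    exact (h1.indicator hgmeas)
  have hswap := MeasureTheory.integral_integral_swap (μ := volume.restrict S)
    (ν := volume.restrict S) (f := g) hInt
  have hgsec : ∀ s : ℝ, (fun τ => g s τ) = Set.indicator (Set.Iic s) (F s) := by
    intro s; funext τ
    by_cases h : τ ≤ s <;> simp [hg, Set.indicator_apply, Function.uncurry, h]
  have hgsec2 : ∀ τ : ℝ, (fun s => g s τ) = Set.indicator (Set.Ici τ) (fun s => F s τ) := by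
    intro τ; funext s
    by_cases h : τ ≤ s <;> simp [hg, Set.indicator_apply, Function.uncurry, h]
  have hL : ∫ s in (0:ℝ)..t, ∫ τ in (0:ℝ)..s, F s τ = ∫ s in S, ∫ τ in S, g s τ := by
    rw [intervalIntegral.integral_of_le ht]
    apply setIntegral_congr_fun measurableSet_Ioc
    intro s hs
    show (∫ τ in (0:ℝ)..s, F s τ) = ∫ τ in S, g s τ
    rw [hgsec s, setIntegral_indicator measurableSet_Iic,
      intervalIntegral.integral_of_le hs.1.le, Set.Ioc_inter_Iic,
      min_eq_right hs.2]
  have hR : ∫ τ in (0:ℝ)..t, ∫ s in τ..t, F s τ = ∫ τ in S, ∫ s in S, g s τ := by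
    rw [intervalIntegral.integral_of_le ht]
    apply setIntegral_congr_fun measurableSet_Ioc
    intro τ hτ
    show (∫ s in τ..t, F s τ) = ∫ s in S, g s τ
    rw [hgsec2 τ, setIntegral_indicator measurableSet_Ici,
      intervalIntegral.integral_of_le hτ.2]
    have : S ∩ Set.Ici τ = Set.Icc τ t := by
      ext s
      simp only [hS, Set.mem_inter_iff, Set.mem_Ioc, Set.mem_Ici, Set.mem_Icc]
      constructor
      · rintro ⟨⟨_, h2⟩, h3⟩; exact ⟨h3, h2⟩
      · rintro ⟨h1, h2⟩; exact ⟨⟨lt_of_lt_of_le hτ.1 h1, h2⟩, h1⟩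
    rw [this, integral_Icc_eq_integral_Ioc]
  rw [hL, hR]
  exact hswap

private lemma duhamel_identity16 {E : Type*} [NormedAddCommGroup E] [NormedSpace ℝ E]
    [CompleteSpace E]
    (T : ℝ) (R R' : ℝ → ℝ) (v : ℝ → E) (hRc : Continuous R) (hR'c : Continuous R')
    (hvc : Continuous v) (hRd : ∀ x ∈ Set.Ioo 0 T, HasDerivAt R (R' x) x)
    {t : ℝ} (ht : t ∈ Set.Icc 0 T) :
    ∫ s in (0:ℝ)..t, (R 0 • v s + ∫ τ in (0:ℝ)..s, R' (s - τ) • v τ) =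
      ∫ τ in (0:ℝ)..t, R (t - τ) • v τ := by
  have h0t : (0:ℝ) ≤ t := ht.1
  have hFc : Continuous (Function.uncurry fun s τ => R' (s - τ) • v τ) := by
    apply Continuous.smul
    · exact hR'c.comp (continuous_fst.sub continuous_snd)
    · exact hvc.comp continuous_snd
  have hφcont : Continuous fun s => ∫ τ in (0:ℝ)..s, R' (s - τ) • v τ :=
    intervalIntegral.continuous_parametric_intervalIntegral_of_continuous hFc continuous_id
  rw [intervalIntegral.integral_add (f := fun s => R 0 • v s) ((hvc.const_smul (R 0)).intervalIntegrable 0 t)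
    (hφcont.intervalIntegrable 0 t)]
  rw [triangle_swap16 (fun s τ => R' (s - τ) • v τ) hFc h0t]
  have hinner : ∀ τ ∈ Set.uIcc (0:ℝ) t,
      (∫ s in τ..t, R' (s - τ) • v τ) = R (t - τ) • v τ - R 0 • v τ := by
    intro τ hτ
    rw [Set.uIcc_of_le h0t] at hτ
    rw [intervalIntegral.integral_smul_const]
    have h1 : (∫ s in τ..t, R' (s - τ)) = ∫ u in (0:ℝ)..(t - τ), R' u := by
      rw [intervalIntegral.integral_comp_sub_right, sub_self]
    have h2 : (∫ u in (0:ℝ)..(t - τ), R' u) = R (t - τ) - R 0 := by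
      apply intervalIntegral.integral_eq_sub_of_hasDerivAt_of_le (sub_nonneg.2 hτ.2)
        hRc.continuousOn
      · intro x hx
        exact hRd x ⟨hx.1, lt_of_lt_of_le hx.2 (by linarith [hτ.1, ht.2])⟩
      · exact hR'c.intervalIntegrable 0 (t - τ)
    rw [h1, h2, sub_smul]
  rw [intervalIntegral.integral_congr hinner]
  have hsplit : (∫ τ in (0:ℝ)..t, (R (t - τ) • v τ - R 0 • v τ)) =
      (∫ τ in (0:ℝ)..t, R (t - τ) • v τ) - ∫ τ in (0:ℝ)..t, R 0 • v τ := by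
    apply intervalIntegral.integral_sub
    · exact ((hRc.comp (continuous_const.sub continuous_id)).smul hvc).intervalIntegrable 0 t
    · exact (hvc.const_smul (R 0)).intervalIntegrable 0 t
  rw [hsplit]
  abel

/-- Duhamel-type identity: if `i v' + A v = 0` on `[0,T]` with `v 0 = -i • f`, then
`y t = ∫₀ᵗ R (t - τ) • v τ dτ` satisfies `y 0 = 0` and `i y' + A y = R t • f` on `(0,T)`. -/
theorem stmt_16 {E : Type*} [NormedAddCommGroup E] [NormedSpace ℂ E] [CompleteSpace E]
    (A : E →L[ℂ] E) (T : ℝ) (hT : 0 < T) (R R' : ℝ → ℝ) (f : E) (v v' : ℝ → E)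
    (hR : ∀ t ∈ Set.Icc (0 : ℝ) T, HasDerivWithinAt R (R' t) (Set.Icc 0 T) t)
    (hR' : ContinuousOn R' (Set.Icc 0 T))
    (hv : ∀ t ∈ Set.Icc (0 : ℝ) T, HasDerivWithinAt v (v' t) (Set.Icc 0 T) t)
    (hv' : ContinuousOn v' (Set.Icc 0 T))
    (hSch : ∀ t ∈ Set.Icc (0 : ℝ) T, Complex.I • v' t + A (v t) = 0)
    (hv0 : v 0 = (-Complex.I) • f) :
    (∫ τ in (0 : ℝ)..(0 : ℝ), R (0 - τ) • v τ) = 0 ∧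
    ∀ t ∈ Set.Ioo (0 : ℝ) T, ∃ y' : E,
      HasDerivAt (fun t => ∫ τ in (0 : ℝ)..t, R (t - τ) • v τ) y' t ∧
      Complex.I • y' + A (∫ τ in (0 : ℝ)..t, R (t - τ) • v τ) = R t • f := by
  constructor
  · exact intervalIntegral.integral_same
  intro t htIoo
  have hT0 : (0:ℝ) ≤ T := hT.le
  set π : ℝ → ℝ := fun x => (Set.projIcc 0 T hT0 x : ℝ) with hπ
  have hπc : Continuous π := continuous_subtype_val.comp (continuous_projIcc)
  have hπmem : ∀ x, π x ∈ Set.Icc 0 T := fun x => (Set.projIcc 0 T hT0 x).2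
  have hπid : ∀ x ∈ Set.Icc (0:ℝ) T, π x = x := by
    intro x hx
    simp only [hπ, Set.projIcc_of_mem hT0 hx]
  set Rc : ℝ → ℝ := fun x => R (π x) with hRcdef
  set R'c : ℝ → ℝ := fun x => R' (π x) with hR'cdef
  set vc : ℝ → E := fun x => v (π x) with hvcdef
  set v'c : ℝ → E := fun x => v' (π x) with hv'cdef
  have hRcont : ContinuousOn R (Set.Icc 0 T) := fun x hx => (hR x hx).continuousWithinAt
  have hvcont : ContinuousOn v (Set.Icc 0 T) := fun x hx => (hv x hx).continuousWithinAt
  have hRcC : Continuous Rc := hRcont.comp_continuous hπc hπmem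
  have hR'cC : Continuous R'c := hR'.comp_continuous hπc hπmem
  have hvcC : Continuous vc := hvcont.comp_continuous hπc hπmem
  have hv'cC : Continuous v'c := hv'.comp_continuous hπc hπmem
  have hReq : ∀ x ∈ Set.Icc (0:ℝ) T, Rc x = R x := fun x hx => by
    simp only [hRcdef, hπid x hx]
  have hR'eq : ∀ x ∈ Set.Icc (0:ℝ) T, R'c x = R' x := fun x hx => by
    simp only [hR'cdef, hπid x hx]
  have hveq : ∀ x ∈ Set.Icc (0:ℝ) T, vc x = v x := fun x hx => by
    simp only [hvcdef, hπid x hx]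
  have hv'eq : ∀ x ∈ Set.Icc (0:ℝ) T, v'c x = v' x := fun x hx => by
    simp only [hv'cdef, hπid x hx]
  have hRcd : ∀ x ∈ Set.Ioo (0:ℝ) T, HasDerivAt Rc (R'c x) x := by
    intro x hx
    have h1 : HasDerivAt R (R' x) x :=
      (hR x (Set.Ioo_subset_Icc_self hx)).hasDerivAt (Icc_mem_nhds hx.1 hx.2)
    have h2 : Rc =ᶠ[nhds x] R :=
      Filter.eventuallyEq_of_mem (isOpen_Ioo.mem_nhds hx)
        (fun y hy => hReq y (Set.Ioo_subset_Icc_self hy))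
    rw [hR'eq x (Set.Ioo_subset_Icc_self hx)]
    exact h1.congr_of_eventuallyEq h2
  have hvcd : ∀ x ∈ Set.Ioo (0:ℝ) T, HasDerivAt vc (v'c x) x := by
    intro x hx
    have h1 : HasDerivAt v (v' x) x :=
      (hv x (Set.Ioo_subset_Icc_self hx)).hasDerivAt (Icc_mem_nhds hx.1 hx.2)
    have h2 : vc =ᶠ[nhds x] v :=
      Filter.eventuallyEq_of_mem (isOpen_Ioo.mem_nhds hx)
        (fun y hy => hveq y (Set.Ioo_subset_Icc_self hy))
    rw [hv'eq x (Set.Ioo_subset_Icc_self hx)]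
    exact h1.congr_of_eventuallyEq h2
  set w : ℝ → E := fun s => Rc 0 • vc s + ∫ τ in (0:ℝ)..s, R'c (s - τ) • vc τ with hwdef
  have hFc : Continuous (Function.uncurry fun s τ => R'c (s - τ) • vc τ) := by
    apply Continuous.smul
    · exact (continuous_algebraMap ℝ ℂ).comp (hR'cC.comp (continuous_fst.sub continuous_snd))
    · exact hvcC.comp continuous_snd
  have hwc : Continuous w := by
    apply (hvcC.const_smul (Rc 0)).add
    exact intervalIntegral.continuous_parametric_intervalIntegral_of_continuous hFc continuous_id
  -- the original convolution agrees with the regularized one on `[0,T]`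
  have hy_eq : ∀ u ∈ Set.Icc (0:ℝ) T,
      (∫ τ in (0:ℝ)..u, R (u - τ) • v τ) = ∫ τ in (0:ℝ)..u, Rc (u - τ) • vc τ := by
    intro u hu
    apply intervalIntegral.integral_congr
    intro τ hτ
    rw [Set.uIcc_of_le hu.1] at hτ
    have h1 : u - τ ∈ Set.Icc (0:ℝ) T := ⟨sub_nonneg.2 hτ.2, by linarith [hτ.1, hu.2]⟩
    have h2 : τ ∈ Set.Icc (0:ℝ) T := ⟨hτ.1, le_trans hτ.2 hu.2⟩
    show R (u - τ) • v τ = Rc (u - τ) • vc τ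
    rw [hReq _ h1, hveq _ h2]
  have htIcc : t ∈ Set.Icc (0:ℝ) T := Set.Ioo_subset_Icc_self htIoo
  have h0t : (0:ℝ) ≤ t := htIcc.1
  have hkey : ∀ u ∈ Set.Ioo (0:ℝ) T,
      (∫ τ in (0:ℝ)..u, R (u - τ) • v τ) = ∫ s in (0:ℝ)..u, w s := by
    intro u hu
    rw [hy_eq u (Set.Ioo_subset_Icc_self hu)]
    simp only [hwdef]
    exact (duhamel_identity16 T Rc R'c vc hRcC hR'cC hvcC hRcd
      (Set.Ioo_subset_Icc_self hu)).symm
  have hFder : HasDerivAt (fun u => ∫ s in (0:ℝ)..u, w s) (w t) t :=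
    intervalIntegral.integral_hasDerivAt_right (hwc.intervalIntegrable 0 t)
      ⟨Set.univ, Filter.univ_mem, hwc.aestronglyMeasurable.restrict⟩ hwc.continuousAt
  have hyder : HasDerivAt (fun u => ∫ τ in (0:ℝ)..u, R (u - τ) • v τ) (w t) t :=
    hFder.congr_of_eventuallyEq (Filter.eventuallyEq_of_mem (isOpen_Ioo.mem_nhds htIoo) hkey)
  refine ⟨w t, hyder, ?_⟩
  -- now the algebraic identity
  have c1 : Continuous fun τ => Rc (t - τ) • vc τ :=
    (hRcC.comp (continuous_const.sub continuous_id)).smul hvcC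
  have c2 : Continuous fun τ => Rc (t - τ) • v'c τ :=
    (hRcC.comp (continuous_const.sub continuous_id)).smul hv'cC
  have c3 : Continuous fun τ => R'c (t - τ) • vc τ :=
    (hR'cC.comp (continuous_const.sub continuous_id)).smul hvcC
  have hwt : w t = Rc 0 • vc t + ∫ τ in (0:ℝ)..t, R'c (t - τ) • vc τ := by
    simp only [hwdef]
  have hAY : A (∫ τ in (0:ℝ)..t, Rc (t - τ) • vc τ)
      = ∫ τ in (0:ℝ)..t, A (Rc (t - τ) • vc τ) :=
    (A.intervalIntegral_comp_comm (c1.intervalIntegrable 0 t)).symm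
  have hored : ∀ τ ∈ Set.uIcc (0:ℝ) t,
      A (Rc (t - τ) • vc τ) = -(Complex.I • (Rc (t - τ) • v'c τ)) := by
    intro τ hτ
    rw [Set.uIcc_of_le h0t] at hτ
    have h2 : τ ∈ Set.Icc (0:ℝ) T := ⟨hτ.1, le_trans hτ.2 htIcc.2⟩
    rw [hveq τ h2, hv'eq τ h2, A.map_smul_of_tower]
    have hA : A (v τ) = -(Complex.I • v' τ) := eq_neg_of_add_eq_zero_right (hSch τ h2)
    rw [hA, smul_neg, smul_comm]
  have hAY2 : A (∫ τ in (0:ℝ)..t, Rc (t - τ) • vc τ)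
      = -(Complex.I • ∫ τ in (0:ℝ)..t, Rc (t - τ) • v'c τ) := by
    rw [hAY, intervalIntegral.integral_congr hored, intervalIntegral.integral_neg,
      intervalIntegral.integral_smul]
  have hgder : ∀ τ ∈ Set.Ioo (0:ℝ) t, HasDerivAt (fun τ => Rc (t - τ) • vc τ)
      (Rc (t - τ) • v'c τ - R'c (t - τ) • vc τ) τ := by
    intro τ hτ
    have hmem : t - τ ∈ Set.Ioo (0:ℝ) T := ⟨sub_pos.2 hτ.2, by linarith [hτ.1, htIoo.2]⟩
    have hin : HasDerivAt (fun x : ℝ => t - x) (-1) τ := (hasDerivAt_id τ).const_sub t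
    have hcomp0 : HasDerivAt (Rc ∘ (fun x : ℝ => t - x)) (R'c (t - τ) * (-1)) τ :=
      HasDerivAt.comp τ (hRcd (t - τ) hmem) hin
    have hcomp : HasDerivAt (fun x : ℝ => Rc (t - x)) (R'c (t - τ) * (-1)) τ := hcomp0
    have h := hcomp.smul (hvcd τ ⟨hτ.1, lt_trans hτ.2 htIoo.2⟩)
    convert h using 1
    · funext x; rfl
    rw [mul_neg_one, neg_smul]
    abel
  have hJ : (∫ τ in (0:ℝ)..t, Rc (t - τ) • v'c τ) - (∫ τ in (0:ℝ)..t, R'c (t - τ) • vc τ)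
      = Rc 0 • vc t - Rc t • vc 0 := by
    have hFTC := intervalIntegral.integral_eq_sub_of_hasDerivAt_of_le h0t
      c1.continuousOn hgder ((c2.sub c3).intervalIntegrable 0 t)
    rw [← intervalIntegral.integral_sub (c2.intervalIntegrable 0 t) (c3.intervalIntegrable 0 t)]
    simpa using hFTC
  have hJ2 : (∫ τ in (0:ℝ)..t, Rc (t - τ) • v'c τ)
      = (Rc 0 • vc t - Rc t • vc 0) + ∫ τ in (0:ℝ)..t, R'c (t - τ) • vc τ :=
    eq_add_of_sub_eq hJ
  rw [hy_eq t htIcc, hAY2, hwt, hJ2]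
  have hstep : Complex.I • (Rc 0 • vc t + ∫ τ in (0:ℝ)..t, R'c (t - τ) • vc τ)
      + -(Complex.I • ((Rc 0 • vc t - Rc t • vc 0) + ∫ τ in (0:ℝ)..t, R'c (t - τ) • vc τ))
      = Complex.I • (Rc t • vc 0) := by
    rw [smul_add, smul_add, smul_sub]
    abel
  rw [hstep, hReq t htIcc, hveq 0 (Set.left_mem_Icc.2 hT0), hv0,
    smul_comm Complex.I (R t), smul_smul]
  simp
end

section
/- Let E be a complex Banach space, A : E → E a continuous linear map, T > 0, and u : [0,T] → E continuously differentiable with i u′(τ) + A u(τ) = 0 for all τ ∈ [0,T]. Let K ∈ C²([−1,1]×[0,T]; ℂ) satisfy i ∂_τ K(t,τ) = ∂ₜ² K(t,τ) for all (t,τ) and K(t,0) = K(t,T) = 0 for all t ∈ [−1,1]. Then the function w(t) := ∫₀ᵀ K(t,τ) u(τ) dτ is twice continuously differentiable on (−1,1) and satisfies −w″(t) + A w(t) = 0 for every t ∈ (−1,1). -/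
open MeasureTheory

open Set intervalIntegral in
private lemma key_deriv {E : Type*} [NormedAddCommGroup E] [NormedSpace ℂ E] [CompleteSpace E]
    (T : ℝ) (hT : 0 < T) (G G' : ℝ → ℝ → ℂ) (v : ℝ → E)
    (hv : ContinuousOn v (Icc 0 T))
    (hG' : ∀ t ∈ Icc (-1:ℝ) 1, ∀ τ ∈ Icc (0:ℝ) T,
      HasDerivWithinAt (fun s => G s τ) (G' t τ) (Icc (-1) 1) t)
    (hGc : ContinuousOn (Function.uncurry G) (Icc (-1:ℝ) 1 ×ˢ Icc (0:ℝ) T))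
    (hG'c : ContinuousOn (Function.uncurry G') (Icc (-1:ℝ) 1 ×ˢ Icc (0:ℝ) T))
    {t₀ : ℝ} (ht₀ : t₀ ∈ Ioo (-1:ℝ) 1) :
    HasDerivAt (fun t => ∫ τ in (0:ℝ)..T, G t τ • v τ) (∫ τ in (0:ℝ)..T, G' t₀ τ • v τ) t₀ := by
  obtain ⟨ε, εpos, hball⟩ := Metric.mem_nhds_iff.1 (isOpen_Ioo.mem_nhds ht₀)
  -- bounds
  have hScomp : IsCompact (Icc (-1:ℝ) 1 ×ˢ Icc (0:ℝ) T) :=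
    (isCompact_Icc).prod isCompact_Icc
  obtain ⟨C, hC⟩ := hScomp.exists_bound_of_continuousOn hG'c
  obtain ⟨Cv, hCv⟩ := (isCompact_Icc (a := (0:ℝ)) (b := T)).exists_bound_of_continuousOn hv
  have hIoc : Set.uIoc (0:ℝ) T = Set.Ioc 0 T := Set.uIoc_of_le hT.le
  have hsubIcc : Set.Ioc (0:ℝ) T ⊆ Set.Icc 0 T := Set.Ioc_subset_Icc_self
  have hGxc : ∀ x ∈ Icc (-1:ℝ) 1, ContinuousOn (fun τ => G x τ) (Icc 0 T) := by
    intro x hx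
    exact hGc.comp (Continuous.continuousOn (continuous_const.prodMk continuous_id)) (fun τ hτ => ⟨hx, hτ⟩)
  have hmeas : ∀ x ∈ Icc (-1:ℝ) 1,
      AEStronglyMeasurable (fun τ => G x τ • v τ) (volume.restrict (Set.uIoc 0 T)) := by
    intro x hx
    rw [hIoc]
    exact (((hGxc x hx).smul hv).mono hsubIcc).aestronglyMeasurable measurableSet_Ioc
  have hballIcc : Metric.ball t₀ ε ⊆ Icc (-1:ℝ) 1 :=
    hball.trans Set.Ioo_subset_Icc_self
  refine (intervalIntegral.hasDerivAt_integral_of_dominated_loc_of_deriv_le (F := fun x τ => G x τ • v τ)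
      (F' := fun x τ => G' x τ • v τ) (bound := fun _ => C * Cv) (Metric.ball_mem_nhds t₀ εpos) ?_ ?_ ?_ ?_ ?_ ?_).2
  · filter_upwards [Metric.ball_mem_nhds t₀ εpos] with x hx
    exact hmeas x (hballIcc hx)
  · apply ContinuousOn.intervalIntegrable
    rw [Set.uIcc_of_le hT.le]
    exact (hGxc t₀ (Set.Ioo_subset_Icc_self ht₀)).smul hv
  · rw [hIoc]
    have : ContinuousOn (fun τ => G' t₀ τ) (Icc 0 T) :=
      hG'c.comp (Continuous.continuousOn (continuous_const.prodMk continuous_id))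
        (fun τ hτ => ⟨Set.Ioo_subset_Icc_self ht₀, hτ⟩)
    exact ((this.smul hv).mono hsubIcc).aestronglyMeasurable measurableSet_Ioc
  · refine Filter.Eventually.of_forall fun τ hτ x hx => ?_
    rw [hIoc] at hτ
    have hτ' : τ ∈ Icc (0:ℝ) T := hsubIcc hτ
    rw [norm_smul]
    have h1 : ‖G' x τ‖ ≤ C := hC (x, τ) ⟨hballIcc hx, hτ'⟩
    have h2 : ‖v τ‖ ≤ Cv := hCv τ hτ'
    exact mul_le_mul h1 h2 (norm_nonneg _) ((norm_nonneg _).trans h1)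
  · exact intervalIntegrable_const
  · refine Filter.Eventually.of_forall fun τ hτ x hx => ?_
    rw [hIoc] at hτ
    have hτ' : τ ∈ Icc (0:ℝ) T := hsubIcc hτ
    have hxI : x ∈ Ioo (-1:ℝ) 1 := hball hx
    have hd : HasDerivAt (fun s => G s τ) (G' x τ) x :=
      (hG' x (Set.Ioo_subset_Icc_self hxI) τ hτ').hasDerivAt
        (Icc_mem_nhds hxI.1 hxI.2)
    exact hd.smul_const (v τ)

open Set intervalIntegral in
/-- The central transform of the paper: if `i u' + A u = 0` on `[0,T]` and `K` is C² on
`[-1,1] × [0,T]` with `i ∂_τ K = ∂ₜ² K` and `K t 0 = K t T = 0`, then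
`w t = ∫₀ᵀ K t τ • u τ dτ` is twice continuously differentiable on `(-1,1)` and satisfies
`-w'' + A w = 0` there. -/
theorem stmt_17 {E : Type*} [NormedAddCommGroup E] [NormedSpace ℂ E] [CompleteSpace E]
    (A : E →L[ℂ] E) (T : ℝ) (hT : 0 < T) (u u' : ℝ → E) (K Ktau Kt Ktt : ℝ → ℝ → ℂ)
    (hu : ∀ τ ∈ Set.Icc (0 : ℝ) T, HasDerivWithinAt u (u' τ) (Set.Icc 0 T) τ)
    (hu' : ContinuousOn u' (Set.Icc 0 T))
    (hSch : ∀ τ ∈ Set.Icc (0 : ℝ) T, Complex.I • u' τ + A (u τ) = 0)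
    (hKtau : ∀ t ∈ Set.Icc (-1 : ℝ) 1, ∀ τ ∈ Set.Icc (0 : ℝ) T,
      HasDerivWithinAt (fun σ => K t σ) (Ktau t τ) (Set.Icc 0 T) τ)
    (hKt : ∀ t ∈ Set.Icc (-1 : ℝ) 1, ∀ τ ∈ Set.Icc (0 : ℝ) T,
      HasDerivWithinAt (fun s => K s τ) (Kt t τ) (Set.Icc (-1) 1) t)
    (hKtt : ∀ t ∈ Set.Icc (-1 : ℝ) 1, ∀ τ ∈ Set.Icc (0 : ℝ) T,
      HasDerivWithinAt (fun s => Kt s τ) (Ktt t τ) (Set.Icc (-1) 1) t)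
    (hKcont : ContinuousOn (Function.uncurry K) (Set.Icc (-1 : ℝ) 1 ×ˢ Set.Icc (0 : ℝ) T))
    (hKtaucont : ContinuousOn (Function.uncurry Ktau)
      (Set.Icc (-1 : ℝ) 1 ×ˢ Set.Icc (0 : ℝ) T))
    (hKtcont : ContinuousOn (Function.uncurry Kt)
      (Set.Icc (-1 : ℝ) 1 ×ˢ Set.Icc (0 : ℝ) T))
    (hKttcont : ContinuousOn (Function.uncurry Ktt)
      (Set.Icc (-1 : ℝ) 1 ×ˢ Set.Icc (0 : ℝ) T))
    (hPDE : ∀ t ∈ Set.Icc (-1 : ℝ) 1, ∀ τ ∈ Set.Icc (0 : ℝ) T,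
      Complex.I * Ktau t τ = Ktt t τ)
    (hK0 : ∀ t ∈ Set.Icc (-1 : ℝ) 1, K t 0 = 0)
    (hKT : ∀ t ∈ Set.Icc (-1 : ℝ) 1, K t T = 0) :
    ∃ w' w'' : ℝ → E,
      (∀ t ∈ Set.Ioo (-1 : ℝ) 1,
        HasDerivAt (fun t => ∫ τ in (0 : ℝ)..T, K t τ • u τ) (w' t) t) ∧
      (∀ t ∈ Set.Ioo (-1 : ℝ) 1, HasDerivAt w' (w'' t) t) ∧
      ContinuousOn w'' (Set.Ioo (-1 : ℝ) 1) ∧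
      (∀ t ∈ Set.Ioo (-1 : ℝ) 1,
        -(w'' t) + A (∫ τ in (0 : ℝ)..T, K t τ • u τ) = 0) := by
  have hucont : ContinuousOn u (Icc 0 T) := fun τ hτ => (hu τ hτ).continuousWithinAt
  set w : ℝ → E := fun t => ∫ τ in (0:ℝ)..T, K t τ • u τ with hw
  refine ⟨fun t => ∫ τ in (0:ℝ)..T, Kt t τ • u τ, fun t => A (w t), ?_, ?_, ?_, ?_⟩
  · intro t ht
    exact key_deriv T hT K Kt u hucont hKt hKcont hKtcont ht
  · -- second derivative
    intro t ht
    have ht' : t ∈ Icc (-1:ℝ) 1 := Ioo_subset_Icc_self ht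
    have hD : HasDerivAt (fun t => ∫ τ in (0:ℝ)..T, Kt t τ • u τ)
        (∫ τ in (0:ℝ)..T, Ktt t τ • u τ) t :=
      key_deriv T hT Kt Ktt u hucont hKtt hKtcont hKttcont ht
    -- show ∫ Ktt t τ • u τ = A (w t) via integration by parts
    have hKc : ContinuousOn (fun τ => K t τ) (Icc 0 T) :=
      hKcont.comp (Continuous.continuousOn (continuous_const.prodMk continuous_id)) (fun τ hτ => ⟨ht', hτ⟩)
    have hKtauc : ContinuousOn (fun τ => Ktau t τ) (Icc 0 T) :=
      hKtaucont.comp (Continuous.continuousOn (continuous_const.prodMk continuous_id)) (fun τ hτ => ⟨ht', hτ⟩)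
    have huIcc : Set.uIcc (0:ℝ) T = Set.Icc 0 T := Set.uIcc_of_le hT.le
    -- derivative of f τ = K t τ • (I • u τ)
    have hf : ∀ τ ∈ Icc (0:ℝ) T,
        HasDerivWithinAt (fun τ => K t τ • (Complex.I • u τ))
          (K t τ • (Complex.I • u' τ) + Ktau t τ • (Complex.I • u τ)) (Icc 0 T) τ := by
      intro τ hτ
      exact (hKtau t ht' τ hτ).smul ((hu τ hτ).const_smul Complex.I)
    have hint1 : IntervalIntegrable (fun τ => K t τ • (Complex.I • u' τ)) volume 0 T := by
      apply ContinuousOn.intervalIntegrable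
      rw [huIcc]; exact hKc.smul (hu'.const_smul Complex.I)
    have hint2 : IntervalIntegrable (fun τ => Ktau t τ • (Complex.I • u τ)) volume 0 T := by
      apply ContinuousOn.intervalIntegrable
      rw [huIcc]; exact hKtauc.smul (hucont.const_smul Complex.I)
    have hFTC : (∫ τ in (0:ℝ)..T, (K t τ • (Complex.I • u' τ) + Ktau t τ • (Complex.I • u τ)))
        = K t T • (Complex.I • u T) - K t 0 • (Complex.I • u 0) := by
      apply integral_eq_sub_of_hasDeriv_right_of_le hT.le
      · exact fun τ hτ => (hf τ hτ).continuousWithinAt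
      · intro τ hτ
        exact ((hf τ (Ioo_subset_Icc_self hτ)).hasDerivAt
          (Icc_mem_nhds hτ.1 hτ.2)).hasDerivWithinAt
      · exact hint1.add hint2
    rw [hK0 t ht', hKT t ht', zero_smul, zero_smul, sub_zero] at hFTC
    rw [intervalIntegral.integral_add hint1 hint2] at hFTC
    have hIBP : (∫ τ in (0:ℝ)..T, Ktau t τ • (Complex.I • u τ))
        = -∫ τ in (0:ℝ)..T, K t τ • (Complex.I • u' τ) := by
      exact eq_neg_of_add_eq_zero_right hFTC
    have hkey : (∫ τ in (0:ℝ)..T, Ktt t τ • u τ) = A (w t) := by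
      have e1 : (∫ τ in (0:ℝ)..T, Ktt t τ • u τ)
          = ∫ τ in (0:ℝ)..T, Ktau t τ • (Complex.I • u τ) := by
        apply intervalIntegral.integral_congr
        intro τ hτ
        rw [huIcc] at hτ
        show Ktt t τ • u τ = Ktau t τ • Complex.I • u τ
        rw [← hPDE t ht' τ hτ, mul_comm, mul_smul]
      have e2 : (∫ τ in (0:ℝ)..T, K t τ • (Complex.I • u' τ))
          = -∫ τ in (0:ℝ)..T, K t τ • A (u τ) := by
        rw [← intervalIntegral.integral_neg]
        apply intervalIntegral.integral_congr
        intro τ hτ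
        rw [huIcc] at hτ
        have := hSch τ hτ
        have : Complex.I • u' τ = -A (u τ) := by
          rw [eq_neg_iff_add_eq_zero]; exact this
        show K t τ • Complex.I • u' τ = -(K t τ • A (u τ))
        rw [this, smul_neg]
      have e3 : (∫ τ in (0:ℝ)..T, K t τ • A (u τ)) = A (w t) := by
        rw [hw]
        have hintw : IntervalIntegrable (fun τ => K t τ • u τ) volume 0 T := by
          apply ContinuousOn.intervalIntegrable
          rw [huIcc]; exact hKc.smul hucont
        rw [← A.intervalIntegral_comp_comm hintw]
        simp
      rw [e1, hIBP, e2, neg_neg, e3]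
    show HasDerivAt _ (A (w t)) t
    rw [← hkey]
    exact hD
  · -- continuity of w'' = A ∘ w
    have hwc : ContinuousOn w (Ioo (-1:ℝ) 1) := by
      intro t ht
      exact ((key_deriv T hT K Kt u hucont hKt hKcont hKtcont ht).continuousAt).continuousWithinAt
    exact A.continuous.comp_continuousOn hwc
  · intro t ht
    simp [w]
end
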